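/- arXiv:2504.06941 — 6 statements merged into one kernel-verified Lean document; each statement's English description precedes it below -/
import Mathlib

section
/- For every prime p and all positive integers m and k, the infinite product f_m^{p^k} is congruent to f_{mp}^{p^{k-1}} modulo p^k, where f_m = ∏_{n≥1}(1 - q^{mn}); that is, every coefficient of the formal power series f_m^{p^k} - f_{mp}^{p^{k-1}} in ℤ[[q]] is divisible by p^k. -/
open PowerSeries
open scoped Classical

/-- `f m = ∏_{n ≥ 1} (1 - q^{m n})` in `ℤ[[q]]`, defined coefficientwise via the
stabilizing partial products (factors with `k > n` do not affect the coefficient of `q^n`). -/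
noncomputable def f (m : ℕ) : PowerSeries ℤ :=
  PowerSeries.mk fun n =>
    PowerSeries.coeff n (∏ k ∈ Finset.Icc 1 n, (1 - (PowerSeries.X : PowerSeries ℤ) ^ (m * k)))

/-- Ramanujan's theta function `φ(q) = ∑_{n ∈ ℤ} q^{n^2} = 1 + 2 ∑_{n ≥ 1} q^{n^2}`. -/
noncomputable def phi : PowerSeries ℤ :=
  PowerSeries.mk fun n => if n = 0 then 1 else if IsSquare n then 2 else 0

/-- Ramanujan's theta function `ψ(q) = ∑_{n ≥ 0} q^{n(n+1)/2}`. -/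
noncomputable def psi : PowerSeries ℤ :=
  PowerSeries.mk fun n => if ∃ k, k * (k + 1) = 2 * n then 1 else 0

/-- Substitution `q ↦ q^j` on formal power series. -/
noncomputable def substPow (j : ℕ) (F : PowerSeries ℤ) : PowerSeries ℤ :=
  PowerSeries.mk fun n => if j ∣ n then PowerSeries.coeff (n / j) F else 0

/-- `F(-q)`. -/
noncomputable def neg_q (F : PowerSeries ℤ) : PowerSeries ℤ :=
  PowerSeries.rescale (-1 : ℤ) F

/-- `bt n` : the number of overcubic partition triples of `n`, via the generating
function `∑ bt(n) q^n = f_4^3 / (f_1^6 f_2^3)`. -/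
noncomputable def bt (n : ℕ) : ℤ :=
  PowerSeries.coeff n (f 4 ^ 3 * Ring.inverse (f 1) ^ 6 * Ring.inverse (f 2) ^ 3)

/-! ### Auxiliary lemmas -/

/-- Partial products. -/
noncomputable def Ppart (m N : ℕ) : PowerSeries ℤ :=
  ∏ k ∈ Finset.Icc 1 N, (1 - (PowerSeries.X : PowerSeries ℤ) ^ (m * k))

lemma coeff_f (m n : ℕ) : PowerSeries.coeff n (f m) = PowerSeries.coeff n (Ppart m n) := by
  simp [f, Ppart, PowerSeries.coeff_mk]

lemma tail_dvd (m j : ℕ) (S : Finset ℕ) (hS : ∀ k ∈ S, j < m * k) :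
    (X : PowerSeries ℤ) ^ (j + 1) ∣ (∏ k ∈ S, (1 - (X : PowerSeries ℤ) ^ (m * k))) - 1 := by
  classical
  induction S using Finset.induction_on with
  | empty => simp
  | @insert a S ha ih =>
    rw [Finset.prod_insert ha]
    have h1 : (X : PowerSeries ℤ) ^ (j + 1) ∣ (∏ k ∈ S, (1 - (X : PowerSeries ℤ) ^ (m * k))) - 1 :=
      ih fun k hk => hS k (Finset.mem_insert_of_mem hk)
    have h2 : (X : PowerSeries ℤ) ^ (j + 1) ∣ (X : PowerSeries ℤ) ^ (m * a) :=
      pow_dvd_pow _ (hS a (Finset.mem_insert_self a S))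
    have key : (1 - (X : PowerSeries ℤ) ^ (m * a)) * (∏ k ∈ S, (1 - (X : PowerSeries ℤ) ^ (m * k))) - 1
        = (1 - (X : PowerSeries ℤ) ^ (m * a)) * ((∏ k ∈ S, (1 - (X : PowerSeries ℤ) ^ (m * k))) - 1)
          - (X : PowerSeries ℤ) ^ (m * a) := by ring
    rw [key]
    exact dvd_sub (Dvd.dvd.mul_left h1 _) h2

lemma coeff_Ppart_stab (m : ℕ) (hm : 0 < m) {i N : ℕ} (h : i ≤ N) :
    PowerSeries.coeff i (Ppart m N) = PowerSeries.coeff i (Ppart m i) := by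
  have hsplit : Ppart m N = Ppart m i * ∏ k ∈ Finset.Ioc i N, (1 - (X : PowerSeries ℤ) ^ (m * k)) := by
    unfold Ppart
    have h1 : ∀ M : ℕ, Finset.Icc 1 M = Finset.Ioc 0 M := by
      intro M; ext x; simp [Nat.lt_iff_add_one_le]
    rw [h1, h1]
    exact (Finset.prod_Ioc_consecutive _ (Nat.zero_le i) h).symm
  have htail : (X : PowerSeries ℤ) ^ (i + 1) ∣
      (∏ k ∈ Finset.Ioc i N, (1 - (X : PowerSeries ℤ) ^ (m * k))) - 1 := by
    apply tail_dvd
    intro k hk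
    have : i < k := (Finset.mem_Ioc.mp hk).1
    calc i < k := this
    _ ≤ m * k := Nat.le_mul_of_pos_left k hm
  have hz : PowerSeries.coeff i (Ppart m i *
      ((∏ k ∈ Finset.Ioc i N, (1 - (X : PowerSeries ℤ) ^ (m * k))) - 1)) = 0 := by
    have : (X : PowerSeries ℤ) ^ (i + 1) ∣ Ppart m i *
        ((∏ k ∈ Finset.Ioc i N, (1 - (X : PowerSeries ℤ) ^ (m * k))) - 1) :=
      Dvd.dvd.mul_left htail _
    exact (PowerSeries.X_pow_dvd_iff.mp this) i (Nat.lt_succ_self i)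
  calc PowerSeries.coeff i (Ppart m N)
      = PowerSeries.coeff i (Ppart m i * 1 + Ppart m i *
          ((∏ k ∈ Finset.Ioc i N, (1 - (X : PowerSeries ℤ) ^ (m * k))) - 1)) := by
        rw [hsplit]; congr 1; ring
    _ = PowerSeries.coeff i (Ppart m i) := by rw [map_add, hz]; simp

lemma f_sub_Ppart (m : ℕ) (hm : 0 < m) (N : ℕ) :
    (X : PowerSeries ℤ) ^ (N + 1) ∣ f m - Ppart m N := by
  rw [PowerSeries.X_pow_dvd_iff]
  intro i hi
  rw [map_sub, coeff_f, coeff_Ppart_stab m hm (Nat.lt_succ_iff.mp hi), sub_self]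

lemma C_dvd_of_coeff_dvd (c : ℤ) (F : PowerSeries ℤ)
    (h : ∀ i, c ∣ PowerSeries.coeff i F) : (PowerSeries.C c) ∣ F := by
  refine ⟨PowerSeries.mk fun i => PowerSeries.coeff i F / c, ?_⟩
  ext i
  rw [PowerSeries.coeff_C_mul, PowerSeries.coeff_mk, Int.mul_ediv_cancel' (h i)]

instance charP_PS (p : ℕ) [Fact p.Prime] : CharP (PowerSeries (ZMod p)) p := by
  constructor
  intro n
  rw [← map_natCast (PowerSeries.C (R := ZMod p)) n, ← map_zero (PowerSeries.C (R := ZMod p))]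
  rw [(PowerSeries.C_injective).eq_iff, CharP.cast_eq_zero_iff (ZMod p) p]

lemma key_dvd (p : ℕ) (hp : p.Prime) (m N : ℕ) :
    (PowerSeries.C (p : ℤ)) ∣ (Ppart m N) ^ p - Ppart (m * p) N := by
  haveI : Fact p.Prime := ⟨hp⟩
  apply C_dvd_of_coeff_dvd
  intro i
  have hmap : PowerSeries.map (Int.castRingHom (ZMod p)) ((Ppart m N) ^ p - Ppart (m * p) N) = 0 := by
    rw [map_sub, map_pow]
    unfold Ppart
    rw [map_prod, map_prod]
    have h1 : ∀ k : ℕ, PowerSeries.map (Int.castRingHom (ZMod p))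
        (1 - (X : PowerSeries ℤ) ^ (m * k)) = 1 - (X : PowerSeries (ZMod p)) ^ (m * k) := by
      intro k; rw [map_sub, map_one, map_pow, PowerSeries.map_X]
    have h2 : ∀ k : ℕ, PowerSeries.map (Int.castRingHom (ZMod p))
        (1 - (X : PowerSeries ℤ) ^ (m * p * k)) = 1 - (X : PowerSeries (ZMod p)) ^ (m * p * k) := by
      intro k; rw [map_sub, map_one, map_pow, PowerSeries.map_X]
    simp only [h1, h2]
    rw [← Finset.prod_pow]
    rw [sub_eq_zero]
    apply Finset.prod_congr rfl
    intro k _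
    rw [sub_pow_char, one_pow, ← pow_mul]
    ring_nf
  have := congrArg (PowerSeries.coeff i) hmap
  rw [PowerSeries.coeff_map, map_zero] at this
  exact (ZMod.intCast_zmod_eq_zero_iff_dvd _ p).mp this

theorem stmt0 (p : ℕ) (hp : p.Prime) (m k : ℕ) (hm : 0 < m) (hk : 0 < k) (n : ℕ) :
    ((p : ℤ) ^ k) ∣ PowerSeries.coeff n (f m ^ p ^ k - f (m * p) ^ p ^ (k - 1)) := by
  set A := Ppart m n
  set B := Ppart (m * p) n
  have hX1 : (X : PowerSeries ℤ) ^ (n + 1) ∣ f m ^ p ^ k - A ^ p ^ k :=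
    dvd_trans (f_sub_Ppart m hm n) (sub_dvd_pow_sub_pow _ _ _)
  have hX2 : (X : PowerSeries ℤ) ^ (n + 1) ∣ B ^ p ^ (k - 1) - f (m * p) ^ p ^ (k - 1) := by
    have := f_sub_Ppart (m * p) (Nat.mul_pos hm hp.pos) n
    have h' : (X : PowerSeries ℤ) ^ (n + 1) ∣ f (m * p) ^ p ^ (k - 1) - B ^ p ^ (k - 1) :=
      dvd_trans this (sub_dvd_pow_sub_pow _ _ _)
    exact dvd_sub_comm.mp h'
  have hmid : (PowerSeries.C ((p : ℤ) ^ k)) ∣ A ^ p ^ k - B ^ p ^ (k - 1) := by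
    have hpk : (p : PowerSeries ℤ) ∣ A ^ p - B := by
      have := key_dvd p hp m n
      rwa [show (PowerSeries.C ((p : ℕ) : ℤ)) = ((p : ℕ) : PowerSeries ℤ) by
        rw [map_natCast]] at this
    have h2 := dvd_sub_pow_of_dvd_sub hpk (k - 1)
    rw [← pow_mul, ← pow_succ'] at h2
    rw [Nat.sub_add_cancel hk] at h2
    have hc : (PowerSeries.C ((p : ℤ) ^ k)) = ((p : ℕ) : PowerSeries ℤ) ^ k := by
      rw [map_pow, map_natCast]
    rw [hc]
    exact h2
  have hcoeff1 : PowerSeries.coeff n (f m ^ p ^ k - A ^ p ^ k) = 0 :=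
    (PowerSeries.X_pow_dvd_iff.mp hX1) n (Nat.lt_succ_self n)
  have hcoeff2 : PowerSeries.coeff n (B ^ p ^ (k - 1) - f (m * p) ^ p ^ (k - 1)) = 0 :=
    (PowerSeries.X_pow_dvd_iff.mp hX2) n (Nat.lt_succ_self n)
  obtain ⟨H, hH⟩ := hmid
  have hsplit : f m ^ p ^ k - f (m * p) ^ p ^ (k - 1)
      = (f m ^ p ^ k - A ^ p ^ k) + (A ^ p ^ k - B ^ p ^ (k - 1))
        + (B ^ p ^ (k - 1) - f (m * p) ^ p ^ (k - 1)) := by ring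
  rw [hsplit, map_add, map_add, hcoeff1, hcoeff2, zero_add, add_zero, hH,
    PowerSeries.coeff_C_mul]
  exact Dvd.intro _ rfl
end

section
/- In ℤ[[q]], φ(q)^2 - φ(-q)^2 = 8q·ψ(q^4)^2, where φ(q) = ∑_{n∈ℤ} q^{n^2} and ψ(q) = ∑_{n≥0} q^{n(n+1)/2}. -/
open PowerSeries
open scoped Classical

private lemma sq_mod_two (x : ℤ) : x^2 % 2 = x % 2 := by
  rcases Int.even_or_odd x with ⟨a, rfl⟩ | ⟨a, rfl⟩
  · have h : (a+a)^2 = 4*(a*a) := by ring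
    rw [h]; omega
  · have h : (2*a+1)^2 = 4*(a*a+a)+1 := by ring
    rw [h]; omega

private lemma helper1 (u v : ℤ) (m : ℕ) (hu : 0 < u) (hv : v.natAbs < u.natAbs)
    (h : u^2 + v^2 = 4*(m:ℤ)+1) :
    ∃ a b : ℤ, 0 ≤ a ∧ 0 ≤ b ∧ u = a+b+1 ∧ v = a-b ∧
      a*(a+1)+b*(b+1) = 2*(m:ℤ) ∧ a ≤ 2*(m:ℤ) ∧ b ≤ 2*(m:ℤ) := by
  have h1 := sq_mod_two u
  have h2 := sq_mod_two v
  obtain ⟨a, ha⟩ : ∃ a, u - 1 + v = 2*a := ⟨(u-1+v)/2, by omega⟩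
  obtain ⟨b, hb⟩ : ∃ b, u - 1 - v = 2*b := ⟨(u-1-v)/2, by omega⟩
  have hub : u = a + b + 1 := by omega
  have hvb : v = a - b := by omega
  have ha0 : 0 ≤ a := by omega
  have hb0 : 0 ≤ b := by omega
  have key2 : 2*(a*(a+1)+b*(b+1)) = 4*(m:ℤ) := by
    have := h; rw [hub, hvb] at this; linear_combination this
  have key : a*(a+1)+b*(b+1) = 2*(m:ℤ) := by linarith
  have haa : a ≤ a*(a+1) := by nlinarith [sq_nonneg a]
  have hbb : b ≤ b*(b+1) := by nlinarith [sq_nonneg b]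
  have hbb0 : 0 ≤ b*(b+1) := mul_nonneg hb0 (by omega)
  have haa0 : 0 ≤ a*(a+1) := mul_nonneg ha0 (by omega)
  exact ⟨a, b, ha0, hb0, hub, hvb, key, by linarith, by linarith⟩

private lemma neq_abs (x y : ℤ) (m : ℕ) (h : x^2 + y^2 = 4*(m:ℤ)+1) :
    x.natAbs ≠ y.natAbs := by
  intro he
  have hx : ((x.natAbs * x.natAbs : ℕ) : ℤ) = x * x := Int.natAbs_mul_self
  have hy : ((y.natAbs * y.natAbs : ℕ) : ℤ) = y * y := Int.natAbs_mul_self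
  have hxy : x^2 = y^2 := by
    have : x * x = y * y := by rw [← hx, ← hy, he]
    nlinarith [this]
  have h1 := sq_mod_two x
  have h2 := sq_mod_two y
  omega

private noncomputable def SS (n : ℕ) : Finset (ℤ × ℤ) :=
  ((Finset.Icc (-(n:ℤ)) n) ×ˢ (Finset.Icc (-(n:ℤ)) n)).filter
    (fun p => p.1^2 + p.2^2 = (n:ℤ))

private noncomputable def KK (m : ℕ) : Finset (ℕ × ℕ) :=
  ((Finset.range (2*m+1)) ×ˢ (Finset.range (2*m+1))).filter
    (fun p => p.1*(p.1+1) + p.2*(p.2+1) = 2*m)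

private def fwd (p : ℤ × ℤ) : (ℕ × ℕ) × ℕ :=
  if p.2.natAbs < p.1.natAbs then
    if 0 < p.1 then ((((p.1-1+p.2)/2).toNat, ((p.1-1-p.2)/2).toNat), 0)
    else ((((-p.1-1-p.2)/2).toNat, ((-p.1-1+p.2)/2).toNat), 1)
  else
    if 0 < p.2 then ((((p.2-1+p.1)/2).toNat, ((p.2-1-p.1)/2).toNat), 2)
    else ((((-p.2-1-p.1)/2).toNat, ((-p.2-1+p.1)/2).toNat), 3)

private def bwd (q : (ℕ × ℕ) × ℕ) : ℤ × ℤ :=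
  if q.2 = 0 then ((q.1.1:ℤ) + q.1.2 + 1, (q.1.1:ℤ) - q.1.2)
  else if q.2 = 1 then (-((q.1.1:ℤ) + q.1.2 + 1), -((q.1.1:ℤ) - q.1.2))
  else if q.2 = 2 then ((q.1.1:ℤ) - q.1.2, (q.1.1:ℤ) + q.1.2 + 1)
  else (-((q.1.1:ℤ) - q.1.2), -((q.1.1:ℤ) + q.1.2 + 1))

private lemma mem_KK4 (m : ℕ) (a b : ℤ) (c : ℕ) (ha0 : 0 ≤ a) (hb0 : 0 ≤ b)
    (key : a*(a+1)+b*(b+1) = 2*(m:ℤ)) (ham : a ≤ 2*(m:ℤ)) (hbm : b ≤ 2*(m:ℤ))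
    (hc : c < 4) : ((a.toNat, b.toNat), c) ∈ (KK m) ×ˢ Finset.range 4 := by
  simp only [KK, Finset.mem_product, Finset.mem_filter, Finset.mem_range]
  refine ⟨⟨⟨by omega, by omega⟩, ?_⟩, hc⟩
  have h2 : ((a.toNat * (a.toNat + 1) + b.toNat * (b.toNat + 1) : ℕ) : ℤ) = ((2*m : ℕ) : ℤ) := by
    push_cast
    rw [Int.toNat_of_nonneg ha0, Int.toNat_of_nonneg hb0]
    linarith
  exact_mod_cast h2

private lemma mem_SS' (m : ℕ) (x y : ℤ) (hx1 : -(4*(m:ℤ)+1) ≤ x) (hx2 : x ≤ 4*(m:ℤ)+1)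
    (hy1 : -(4*(m:ℤ)+1) ≤ y) (hy2 : y ≤ 4*(m:ℤ)+1) (h : x^2 + y^2 = 4*(m:ℤ)+1) :
    (x, y) ∈ SS (4*m+1) := by
  simp only [SS, Finset.mem_filter, Finset.mem_product, Finset.mem_Icc]
  push_cast
  exact ⟨⟨⟨hx1, hx2⟩, hy1, hy2⟩, h⟩

private lemma card_SS (m : ℕ) : (SS (4*m+1)).card = 4 * (KK m).card := by
  have h4 : 4 * (KK m).card = ((KK m) ×ˢ Finset.range 4).card := by
    rw [Finset.card_product, Finset.card_range]; ring
  rw [h4]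
  apply Finset.card_nbij' fwd bwd
  · -- forward membership
    rintro ⟨x, y⟩ hp
    simp only [Finset.mem_coe, SS, Finset.mem_filter, Finset.mem_product, Finset.mem_Icc] at hp
    obtain ⟨⟨⟨hx1, hx2⟩, hy1, hy2⟩, hxy⟩ := hp
    have hxy' : x^2 + y^2 = 4*(m:ℤ)+1 := by push_cast at hxy ⊢; linarith
    have hne := neq_abs x y m hxy'
    unfold fwd
    dsimp only
    split_ifs with h1 h2 h3
    · obtain ⟨a, b, ha0, hb0, hub, hvb, key, ham, hbm⟩ := helper1 x y m h2 h1 hxy'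
      have e1 : (x-1+y)/2 = a := by omega
      have e2 : (x-1-y)/2 = b := by omega
      rw [e1, e2]; exact mem_KK4 m a b 0 ha0 hb0 key ham hbm (by norm_num)
    · have hx0 : x < 0 := by omega
      obtain ⟨a, b, ha0, hb0, hub, hvb, key, ham, hbm⟩ :=
        helper1 (-x) (-y) m (by omega) (by simpa using h1) (by linear_combination hxy')
      have e1 : (-x-1-y)/2 = a := by omega
      have e2 : (-x-1+y)/2 = b := by omega
      rw [e1, e2]; exact mem_KK4 m a b 1 ha0 hb0 key ham hbm (by norm_num)
    · have h1' : x.natAbs < y.natAbs := by omega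
      obtain ⟨a, b, ha0, hb0, hub, hvb, key, ham, hbm⟩ :=
        helper1 y x m h3 h1' (by linear_combination hxy')
      have e1 : (y-1+x)/2 = a := by omega
      have e2 : (y-1-x)/2 = b := by omega
      rw [e1, e2]; exact mem_KK4 m a b 2 ha0 hb0 key ham hbm (by norm_num)
    · have h1' : x.natAbs < y.natAbs := by omega
      have hy0 : y < 0 := by omega
      obtain ⟨a, b, ha0, hb0, hub, hvb, key, ham, hbm⟩ :=
        helper1 (-y) (-x) m (by omega) (by simpa using h1') (by linear_combination hxy')
      have e1 : (-y-1-x)/2 = a := by omega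
      have e2 : (-y-1+x)/2 = b := by omega
      rw [e1, e2]; exact mem_KK4 m a b 3 ha0 hb0 key ham hbm (by norm_num)
  · -- backward membership
    rintro ⟨⟨k, l⟩, c⟩ hq
    simp only [Finset.mem_coe, KK, Finset.mem_product, Finset.mem_filter, Finset.mem_range] at hq
    obtain ⟨⟨⟨hk, hl⟩, heq⟩, hc⟩ := hq
    have heqz : (k:ℤ)*(k+1) + (l:ℤ)*(l+1) = 2*(m:ℤ) := by exact_mod_cast heq
    interval_cases c <;> simp only [bwd] <;> norm_num <;>
      exact mem_SS' m _ _ (by push_cast; omega) (by push_cast; omega) (by push_cast; omega)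
        (by push_cast; omega) (by push_cast; linear_combination 2*heqz)
  · -- left inverse
    rintro ⟨x, y⟩ hp
    simp only [Finset.mem_coe, SS, Finset.mem_filter, Finset.mem_product, Finset.mem_Icc] at hp
    obtain ⟨-, hxy⟩ := hp
    have hxy' : x^2 + y^2 = 4*(m:ℤ)+1 := by push_cast at hxy ⊢; linarith
    have hne := neq_abs x y m hxy'
    unfold fwd
    dsimp only
    split_ifs with h1 h2 h3
    · obtain ⟨a, b, ha0, hb0, hub, hvb, -, -, -⟩ := helper1 x y m h2 h1 hxy'
      simp only [bwd, if_pos, Prod.mk.injEq]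
      norm_num
      omega
    · have hx0 : x < 0 := by omega
      obtain ⟨a, b, ha0, hb0, hub, hvb, -, -, -⟩ :=
        helper1 (-x) (-y) m (by omega) (by simpa using h1) (by linear_combination hxy')
      simp only [bwd, Prod.mk.injEq]
      norm_num
      omega
    · have h1' : x.natAbs < y.natAbs := by omega
      obtain ⟨a, b, ha0, hb0, hub, hvb, -, -, -⟩ :=
        helper1 y x m h3 h1' (by linear_combination hxy')
      simp only [bwd, Prod.mk.injEq]
      norm_num
      omega
    · have h1' : x.natAbs < y.natAbs := by omega
      have hy0 : y < 0 := by omega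
      obtain ⟨a, b, ha0, hb0, hub, hvb, -, -, -⟩ :=
        helper1 (-y) (-x) m (by omega) (by simpa using h1') (by linear_combination hxy')
      simp only [bwd, Prod.mk.injEq]
      norm_num
      omega
  · -- right inverse
    rintro ⟨⟨k, l⟩, c⟩ hq
    simp only [Finset.mem_coe, KK, Finset.mem_product, Finset.mem_filter, Finset.mem_range] at hq
    obtain ⟨⟨⟨hk, hl⟩, heq⟩, hc⟩ := hq
    interval_cases c <;>
      · simp only [bwd]
        norm_num
        unfold fwd
        dsimp only
        split_ifs with h1 h2 <;> simp only [Prod.mk.injEq] <;>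
          first
            | (exfalso; omega)
            | (exact ⟨⟨by omega, by omega⟩, trivial⟩)
            | (exact ⟨⟨by omega, by omega⟩, rfl⟩)

private lemma cardA (n i : ℕ) (hn : 0 < n) (hi : i ≤ n) :
    (((Finset.Icc (-(n:ℤ)) n).filter (fun x => x^2 = (i:ℤ))).card : ℤ)
      = if i = 0 then 1 else if IsSquare i then 2 else 0 := by
  split_ifs with h0 hsq
  · subst h0
    have hset : (Finset.Icc (-(n:ℤ)) n).filter (fun x => x^2 = ((0:ℕ):ℤ)) = {0} := by
      ext x
      simp only [Finset.mem_filter, Finset.mem_Icc, Finset.mem_singleton, Nat.cast_zero]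
      constructor
      · rintro ⟨-, hx⟩
        exact sq_eq_zero_iff.mp hx
      · rintro rfl
        refine ⟨⟨by omega, by omega⟩, by norm_num⟩
    rw [hset, Finset.card_singleton]; norm_num
  · obtain ⟨r, hr⟩ := hsq
    have hr0 : 0 < r := by
      rcases Nat.eq_zero_or_pos r with rfl | h
      · omega
      · exact h
    have hrn : r ≤ n := le_trans (Nat.le_mul_of_pos_left r hr0) (by omega)
    have hset : (Finset.Icc (-(n:ℤ)) n).filter (fun x => x^2 = (i:ℤ))
        = {(r:ℤ), -(r:ℤ)} := by
      ext x
      simp only [Finset.mem_filter, Finset.mem_Icc, Finset.mem_insert, Finset.mem_singleton]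
      constructor
      · rintro ⟨-, hx⟩
        have hx' : (x - r) * (x + r) = 0 := by
          have hcast : ((i:ℤ)) = (r:ℤ) * r := by exact_mod_cast congrArg (Nat.cast : ℕ → ℤ) hr
          rw [hcast] at hx
          linear_combination hx
        rcases mul_eq_zero.mp hx' with h | h
        · left; omega
        · right; omega
      · have hcast : ((i:ℤ)) = (r:ℤ) * r := by exact_mod_cast congrArg (Nat.cast : ℕ → ℤ) hr
        rintro (rfl | rfl)
        · exact ⟨⟨by omega, by omega⟩, by rw [hcast]; ring⟩
        · exact ⟨⟨by omega, by omega⟩, by rw [hcast]; ring⟩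
    rw [hset, Finset.card_insert_of_notMem (by simp; omega), Finset.card_singleton]
    norm_num
  · have hset : (Finset.Icc (-(n:ℤ)) n).filter (fun x => x^2 = (i:ℤ)) = ∅ := by
      ext x
      simp only [Finset.mem_filter, Finset.mem_Icc, Finset.notMem_empty, iff_false, not_and]
      rintro - hx
      apply hsq
      refine ⟨x.natAbs, ?_⟩
      have : ((x.natAbs * x.natAbs : ℕ) : ℤ) = (i:ℤ) := by
        rw [Int.natAbs_mul_self]; linear_combination hx
      exact_mod_cast this.symm
    rw [hset]; simp
private lemma sumA (n : ℕ) (hn : 0 < n) :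
    ∑ p ∈ Finset.HasAntidiagonal.antidiagonal n, PowerSeries.coeff p.1 phi * PowerSeries.coeff p.2 phi
      = ((SS n).card : ℤ) := by
  have hmaps : ∀ q ∈ SS n, ((q.1^2).toNat, (q.2^2).toNat) ∈ Finset.HasAntidiagonal.antidiagonal n := by
    rintro ⟨x, y⟩ hq
    simp only [SS, Finset.mem_filter, Finset.mem_product, Finset.mem_Icc] at hq
    obtain ⟨-, h⟩ := hq
    simp only [Finset.HasAntidiagonal.mem_antidiagonal]
    have h1 := sq_nonneg x
    have h2 := sq_nonneg y
    omega
  rw [Finset.card_eq_sum_card_fiberwise hmaps, Nat.cast_sum]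
  apply Finset.sum_congr rfl
  rintro ⟨i, j⟩ hp
  have hij : i + j = n := Finset.HasAntidiagonal.mem_antidiagonal.mp hp
  have hfib : (SS n).filter (fun q => ((q.1^2).toNat, (q.2^2).toNat) = (i, j))
      = ((Finset.Icc (-(n:ℤ)) n).filter (fun x => x^2 = (i:ℤ)))
          ×ˢ ((Finset.Icc (-(n:ℤ)) n).filter (fun x => x^2 = (j:ℤ))) := by
    ext ⟨x, y⟩
    simp only [SS, Finset.filter_filter, Finset.mem_filter, Finset.mem_product, Finset.mem_Icc,
      Prod.mk.injEq]
    have h1 := sq_nonneg x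
    have h2 := sq_nonneg y
    omega
  rw [hfib, Finset.card_product]
  push_cast
  rw [cardA n i hn (by omega), cardA n j hn (by omega)]
  simp [phi, PowerSeries.coeff_mk]

private lemma g8_eq (k s : ℕ) (h : k*(k+1) = 2*s) : (Nat.sqrt (8*s+1)-1)/2 = k := by
  have h2 : 8*s+1 = (2*k+1)*(2*k+1) := by
    have e : (2*k+1)*(2*k+1) = 4*(k*(k+1)) + 1 := by ring
    rw [e, h]; ring
  rw [h2, Nat.sqrt_eq]
  omega

private lemma hcoeffG : ∀ i : ℕ, PowerSeries.coeff i (substPow 4 psi)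
    = if 4 ∣ i then (if ∃ k, k * (k + 1) = 2 * (i/4) then 1 else 0) else 0 := by
  intro i
  simp [substPow, psi, PowerSeries.coeff_mk]

private lemma sumG (m : ℕ) :
    ∑ p ∈ Finset.HasAntidiagonal.antidiagonal (4*m),
        PowerSeries.coeff p.1 (substPow 4 psi) * PowerSeries.coeff p.2 (substPow 4 psi)
      = ((KK m).card : ℤ) := by
  classical
  set emb : ℕ × ℕ ↪ ℕ × ℕ :=
    ⟨fun p => (4*p.1, 4*p.2), show Function.Injective (fun p : ℕ × ℕ => (4*p.1, 4*p.2)) from fun p q h => by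
      simp only [Prod.ext_iff] at h ⊢; omega⟩ with hemb
  have hsub : (Finset.HasAntidiagonal.antidiagonal m).map emb ⊆ Finset.HasAntidiagonal.antidiagonal (4*m) := by
    intro p hp
    simp only [Finset.mem_map, Finset.HasAntidiagonal.mem_antidiagonal, hemb, Function.Embedding.coeFn_mk] at hp ⊢
    obtain ⟨⟨s, t⟩, hst, rfl⟩ := hp
    omega
  have hzero : ∀ p ∈ Finset.HasAntidiagonal.antidiagonal (4*m), p ∉ (Finset.HasAntidiagonal.antidiagonal m).map emb →
      PowerSeries.coeff p.1 (substPow 4 psi) * PowerSeries.coeff p.2 (substPow 4 psi) = 0 := by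
    intro p hp hnot
    have hpn := Finset.HasAntidiagonal.mem_antidiagonal.mp hp
    by_cases h1 : 4 ∣ p.1
    · by_cases h2 : 4 ∣ p.2
      · exfalso
        apply hnot
        simp only [Finset.mem_map, Finset.HasAntidiagonal.mem_antidiagonal, hemb, Function.Embedding.coeFn_mk]
        exact ⟨(p.1/4, p.2/4), by omega, by simp [Prod.ext_iff]; omega⟩
      · rw [hcoeffG p.2, if_neg h2, mul_zero]
    · rw [hcoeffG p.1, if_neg h1, zero_mul]
  rw [← Finset.sum_subset hsub hzero, Finset.sum_map]
  simp only [hemb, Function.Embedding.coeFn_mk]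
  have hval : ∀ s : ℕ, PowerSeries.coeff (4*s) (substPow 4 psi)
      = if ∃ k, k * (k + 1) = 2 * s then 1 else 0 := by
    intro s
    rw [hcoeffG, if_pos ⟨s, rfl⟩, Nat.mul_div_cancel_left s (by norm_num)]
  have hstep : ∀ p ∈ Finset.HasAntidiagonal.antidiagonal m,
      PowerSeries.coeff (4*p.1) (substPow 4 psi) * PowerSeries.coeff (4*p.2) (substPow 4 psi)
        = if (∃ k, k * (k + 1) = 2 * p.1) ∧ (∃ k, k * (k + 1) = 2 * p.2) then (1:ℤ) else 0 := by
    intro p hp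
    rw [hval, hval]
    split_ifs <;> tauto
  rw [Finset.sum_congr rfl hstep, Finset.sum_boole]
  congr 1
  apply Finset.card_nbij'
    (i := fun p => ((Nat.sqrt (8*p.1+1)-1)/2, (Nat.sqrt (8*p.2+1)-1)/2))
    (j := fun q => (q.1*(q.1+1)/2, q.2*(q.2+1)/2))
  · rintro ⟨s, t⟩ hp
    simp only [Finset.mem_coe, Finset.mem_filter, Finset.HasAntidiagonal.mem_antidiagonal] at hp
    obtain ⟨hst, ⟨k, hk⟩, ⟨l, hl⟩⟩ := hp
    beta_reduce
    rw [g8_eq k s hk, g8_eq l t hl]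
    simp only [Finset.mem_coe, KK, Finset.mem_filter, Finset.mem_product, Finset.mem_range]
    have hkk := Nat.le_mul_of_pos_left k (show 0 < k+1 by omega)
    have hll := Nat.le_mul_of_pos_left l (show 0 < l+1 by omega)
    have hkk' : k ≤ k * (k+1) := by rw [mul_comm] at hkk; exact hkk
    have hll' : l ≤ l * (l+1) := by rw [mul_comm] at hll; exact hll
    exact ⟨⟨by omega, by omega⟩, by omega⟩
  · rintro ⟨k, l⟩ hq
    simp only [Finset.mem_coe, KK, Finset.mem_filter, Finset.mem_product, Finset.mem_range] at hq
    obtain ⟨⟨hk, hl⟩, heq⟩ := hq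
    obtain ⟨c, hc⟩ := Nat.even_mul_succ_self k
    obtain ⟨d, hd⟩ := Nat.even_mul_succ_self l
    simp only [Finset.mem_coe, Finset.mem_filter, Finset.HasAntidiagonal.mem_antidiagonal]
    exact ⟨by omega, ⟨k, by omega⟩, ⟨l, by omega⟩⟩
  · rintro ⟨s, t⟩ hp
    simp only [Finset.mem_coe, Finset.mem_filter, Finset.HasAntidiagonal.mem_antidiagonal] at hp
    obtain ⟨hst, ⟨k, hk⟩, ⟨l, hl⟩⟩ := hp
    beta_reduce
    rw [g8_eq k s hk, g8_eq l t hl]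
    simp only [Prod.ext_iff]
    constructor <;> omega
  · rintro ⟨k, l⟩ hq
    simp only [Finset.mem_coe, KK, Finset.mem_filter, Finset.mem_product, Finset.mem_range] at hq
    obtain ⟨⟨hk, hl⟩, heq⟩ := hq
    obtain ⟨c, hc⟩ := Nat.even_mul_succ_self k
    obtain ⟨d, hd⟩ := Nat.even_mul_succ_self l
    have e1 : k * (k+1) = 2 * (k*(k+1)/2) := by omega
    have e2 : l * (l+1) = 2 * (l*(l+1)/2) := by omega
    beta_reduce
    rw [g8_eq k _ e1, g8_eq l _ e2]

private lemma square_mod4 (i : ℕ) (h : IsSquare i) : i % 4 = 0 ∨ i % 4 = 1 := by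
  obtain ⟨r, rfl⟩ := h
  rcases Nat.even_or_odd r with ⟨a, rfl⟩ | ⟨a, rfl⟩
  · have e : (a+a)*(a+a) = 4*(a*a) := by ring
    rw [e]; omega
  · have e : (2*a+1)*(2*a+1) = 4*(a*a+a)+1 := by ring
    rw [e]; omega

private lemma coeff_phi_ne (i : ℕ) (h : PowerSeries.coeff i phi ≠ 0) : IsSquare i := by
  by_contra hns
  apply h
  have h0 : i ≠ 0 := by rintro rfl; exact hns ⟨0, rfl⟩
  simp only [phi, PowerSeries.coeff_mk]
  rw [if_neg h0, if_neg hns]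

private lemma hGzero (N : ℕ) (hN : ¬ (4 ∣ N)) :
    ∑ p ∈ Finset.HasAntidiagonal.antidiagonal N,
        PowerSeries.coeff p.1 (substPow 4 psi) * PowerSeries.coeff p.2 (substPow 4 psi) = 0 := by
  apply Finset.sum_eq_zero
  intro p hp
  have hpn := Finset.HasAntidiagonal.mem_antidiagonal.mp hp
  by_cases h1 : 4 ∣ p.1
  · have h2 : ¬ 4 ∣ p.2 := by omega
    rw [hcoeffG p.2, if_neg h2, mul_zero]
  · rw [hcoeffG p.1, if_neg h1, zero_mul]

private lemma hAzero (N : ℕ) (hN : N % 4 = 3) :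
    ∑ p ∈ Finset.HasAntidiagonal.antidiagonal N,
        PowerSeries.coeff p.1 phi * PowerSeries.coeff p.2 phi = 0 := by
  apply Finset.sum_eq_zero
  intro p hp
  have hpn := Finset.HasAntidiagonal.mem_antidiagonal.mp hp
  by_cases h1 : PowerSeries.coeff p.1 phi = 0
  · rw [h1, zero_mul]
  by_cases h2 : PowerSeries.coeff p.2 phi = 0
  · rw [h2, mul_zero]
  exfalso
  have s1 := square_mod4 p.1 (coeff_phi_ne _ h1)
  have s2 := square_mod4 p.2 (coeff_phi_ne _ h2)
  omega

theorem stmt3 : phi ^ 2 - (neg_q phi) ^ 2 = 8 * PowerSeries.X * (substPow 4 psi) ^ 2 := by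
  have key : ∀ n : ℕ, PowerSeries.coeff n (phi ^ 2 - (neg_q phi) ^ 2)
      = (1 - (-1:ℤ)^n) * ∑ p ∈ Finset.HasAntidiagonal.antidiagonal n,
          PowerSeries.coeff p.1 phi * PowerSeries.coeff p.2 phi := by
    intro n
    rw [map_sub, pow_two, pow_two, PowerSeries.coeff_mul, PowerSeries.coeff_mul, sub_mul, one_mul,
      Finset.mul_sum]
    congr 1
    apply Finset.sum_congr rfl
    intro p hp
    have hpn : p.1 + p.2 = n := Finset.HasAntidiagonal.mem_antidiagonal.mp hp
    simp only [neg_q, PowerSeries.coeff_rescale]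
    rw [← hpn, pow_add]
    ring
  have h8 : (8 : PowerSeries ℤ) * PowerSeries.X * (substPow 4 psi)^2
      = PowerSeries.X * ((PowerSeries.C 8) * (substPow 4 psi)^2) := by
    rw [map_ofNat]; ring
  have keyR : ∀ n : ℕ, PowerSeries.coeff (n+1) (8 * PowerSeries.X * (substPow 4 psi)^2)
      = 8 * ∑ p ∈ Finset.HasAntidiagonal.antidiagonal n,
          PowerSeries.coeff p.1 (substPow 4 psi) * PowerSeries.coeff p.2 (substPow 4 psi) := by
    intro n
    rw [h8, PowerSeries.coeff_succ_X_mul, PowerSeries.coeff_C_mul, pow_two, PowerSeries.coeff_mul]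
  have keyR0 : PowerSeries.coeff 0 (8 * PowerSeries.X * (substPow 4 psi)^2) = 0 := by
    rw [h8, PowerSeries.coeff_zero_eq_constantCoeff, map_mul]
    simp
  ext n
  rw [key n]
  rcases Nat.even_or_odd n with he | ho
  · have he' : n % 2 = 0 := Nat.even_iff.mp he
    rw [he.neg_one_pow, sub_self, zero_mul]
    cases n with
    | zero => rw [keyR0]
    | succ k =>
      rw [keyR k, hGzero k (by omega), mul_zero]
  · have ho' : n % 2 = 1 := Nat.odd_iff.mp ho
    rw [ho.neg_one_pow]
    by_cases h4 : n % 4 = 1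
    · obtain ⟨m, rfl⟩ : ∃ m, n = 4*m+1 := ⟨n/4, by omega⟩
      rw [sumA _ (by omega), card_SS m, keyR (4*m), sumG m]
      push_cast
      ring
    · have h4' : n % 4 = 3 := by omega
      obtain ⟨k, rfl⟩ : ∃ k, n = k+1 := ⟨n-1, by omega⟩
      rw [hAzero _ h4', mul_zero, keyR k, hGzero k (by omega), mul_zero]
end

section
/- In ℤ[[q]], φ(q)^2 + φ(-q)^2 = 2φ(q^2)^2, where φ(q) = ∑_{n∈ℤ} q^{n^2}. -/
open PowerSeries
open scoped Classical

noncomputable def cc (n : ℕ) : ℤ := if n = 0 then 1 else if IsSquare n then 2 else 0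

noncomputable def s (i : ℕ) : Finset ℤ :=
  (Finset.Icc (-(i:ℤ)) i).filter (fun a => a^2 = (i:ℤ))

lemma mem_s {i : ℕ} {a : ℤ} : a ∈ s i ↔ a^2 = (i:ℤ) := by
  simp only [s, Finset.mem_filter, Finset.mem_Icc]
  constructor
  · tauto
  · intro h
    refine ⟨⟨?_, ?_⟩, h⟩ <;> nlinarith [sq_nonneg (a-1), sq_nonneg (a+1)]

lemma card_s (i : ℕ) : ((s i).card : ℤ) = cc i := by
  unfold cc
  rcases eq_or_ne i 0 with rfl | h0
  · have : s 0 = {0} := by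
      ext a; simp [mem_s, pow_eq_zero_iff]
    simp [this]
  · rw [if_neg h0]
    by_cases hsq : IsSquare i
    · obtain ⟨k, rfl⟩ := hsq
      have hk : k ≠ 0 := by rintro rfl; exact h0 rfl
      have : s (k*k) = {(k:ℤ), -(k:ℤ)} := by
        ext a
        rw [mem_s]
        push_cast
        rw [show ((k:ℤ))*k = (k:ℤ)^2 by ring, sq_eq_sq_iff_eq_or_eq_neg]
        simp
      rw [if_pos ⟨k, rfl⟩, this, Finset.card_insert_of_notMem, Finset.card_singleton]
      · norm_num
      · simp only [Finset.mem_singleton]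
        intro h
        have : (k:ℤ) = 0 := by omega
        exact hk (by exact_mod_cast this)
    · rw [if_neg hsq]
      have : s i = ∅ := by
        ext a
        simp only [mem_s, Finset.notMem_empty, iff_false]
        intro h
        have hna : ((a.natAbs * a.natAbs : ℕ) : ℤ) = (i:ℤ) := by
          rw [Int.natAbs_mul_self, ← sq]; exact h
        exact hsq ⟨a.natAbs, by exact_mod_cast hna.symm⟩
      simp [this]

noncomputable def T (n : ℕ) : Finset (ℤ × ℤ) :=
  ((Finset.Icc (-(n:ℤ)) n) ×ˢ (Finset.Icc (-(n:ℤ)) n)).filter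
    (fun p => p.1^2 + p.2^2 = (n:ℤ))

lemma mem_T {n : ℕ} {p : ℤ × ℤ} : p ∈ T n ↔ p.1^2 + p.2^2 = (n:ℤ) := by
  simp only [T, Finset.mem_filter, Finset.mem_product, Finset.mem_Icc]
  constructor
  · tauto
  · intro h
    refine ⟨⟨⟨?_, ?_⟩, ?_, ?_⟩, h⟩ <;>
      nlinarith [sq_nonneg (p.1-1), sq_nonneg (p.1+1), sq_nonneg (p.2-1), sq_nonneg (p.2+1),
        sq_nonneg p.1, sq_nonneg p.2]

lemma coeff_phi (n : ℕ) : PowerSeries.coeff n phi = cc n := by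
  simp [phi, cc]

lemma coeff_phi_sq (n : ℕ) : PowerSeries.coeff n (phi^2) = ((T n).card : ℤ) := by
  rw [sq, PowerSeries.coeff_mul]
  have hfib : ∀ x ∈ T n, ((x.1^2).toNat, (x.2^2).toNat) ∈ Finset.HasAntidiagonal.antidiagonal n := by
    intro x hx
    rw [mem_T] at hx
    simp only [Finset.HasAntidiagonal.mem_antidiagonal]
    have h1 : (0:ℤ) ≤ x.1^2 := sq_nonneg _
    have h2 : (0:ℤ) ≤ x.2^2 := sq_nonneg _
    omega
  rw [Finset.card_eq_sum_card_fiberwise hfib]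
  push_cast
  refine Finset.sum_congr rfl ?_
  rintro ⟨i, j⟩ hij
  rw [Finset.HasAntidiagonal.mem_antidiagonal] at hij
  have : (Finset.filter (fun x : ℤ × ℤ => ((x.1^2).toNat, (x.2^2).toNat) = (i, j)) (T n))
      = s i ×ˢ s j := by
    ext ⟨a, b⟩
    simp only [Finset.mem_filter, Finset.mem_product, mem_s, mem_T, Prod.mk.injEq]
    constructor
    · rintro ⟨hsum, h1, h2⟩
      have ha : a^2 = (i:ℤ) := by
        rw [← h1, Int.toNat_of_nonneg (sq_nonneg _)]
      have hb : b^2 = (j:ℤ) := by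
        rw [← h2, Int.toNat_of_nonneg (sq_nonneg _)]
      exact ⟨ha, hb⟩
    · rintro ⟨ha, hb⟩
      refine ⟨by rw [ha, hb]; exact_mod_cast congrArg (Nat.cast (R := ℤ)) hij, ?_, ?_⟩
      · rw [ha]; simp
      · rw [hb]; simp
  rw [this, Finset.card_product]
  push_cast [← card_s]
  simp [coeff_phi, ← card_s]

lemma T_card (m : ℕ) : (T m).card = (T (2*m)).card := by
  apply Finset.card_bij (fun p _ => ((p.1 + p.2, p.1 - p.2) : ℤ × ℤ))
  · intro p hp
    rw [mem_T] at hp ⊢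
    push_cast
    linear_combination 2 * hp
  · intro p _ q _ h
    simp only [Prod.mk.injEq, Prod.ext_iff] at h ⊢
    omega
  · intro x hx
    rw [mem_T] at hx
    have h2 : Even (x.1^2 + x.2^2) := by
      rw [hx]; exact ⟨(m : ℤ), by push_cast; ring⟩
    have heven : Even (x.1 + x.2) := by
      rw [Int.even_add]
      have h3 := Int.even_add.mp h2
      simpa [Int.even_pow] using h3
    obtain ⟨a, ha⟩ := heven
    refine ⟨(a, x.1 - a), ?_, ?_⟩
    · rw [mem_T]
      show a^2 + (x.1 - a)^2 = ((m : ℕ) : ℤ)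
      have hx2 : x.2 = a + a - x.1 := by omega
      have key : x.1^2 + (a + a - x.1)^2 = 2*(m:ℤ) := by
        rw [← hx2]; push_cast at hx; linarith [hx]
      nlinarith [key]
    · simp only [Prod.ext_iff]
      constructor <;> omega

lemma coeff_negq_sq (n : ℕ) :
    PowerSeries.coeff n ((neg_q phi)^2) = (-1)^n * PowerSeries.coeff n (phi^2) := by
  have : (neg_q phi)^2 = PowerSeries.rescale (-1 : ℤ) (phi^2) := by
    rw [neg_q, ← map_pow]
  rw [this, PowerSeries.coeff_rescale]

lemma coeff_substPow_sq (n : ℕ) :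
    PowerSeries.coeff n ((substPow 2 phi)^2)
      = if 2 ∣ n then PowerSeries.coeff (n/2) (phi^2) else 0 := by
  have hc : ∀ i, PowerSeries.coeff i (substPow 2 phi)
      = if 2 ∣ i then PowerSeries.coeff (i/2) phi else 0 := by
    intro i; simp [substPow]
  rw [sq, PowerSeries.coeff_mul]
  by_cases hn : 2 ∣ n
  · rw [if_pos hn, sq, PowerSeries.coeff_mul]
    rw [← Finset.sum_filter_of_ne (p := fun p : ℕ × ℕ => 2 ∣ p.1)
      (by
        intro p hp h
        rw [Finset.HasAntidiagonal.mem_antidiagonal] at hp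
        by_contra h1
        rw [hc p.1, if_neg h1, zero_mul] at h
        exact h rfl)]
    apply Finset.sum_nbij' (fun p : ℕ × ℕ => (p.1/2, p.2/2)) (fun p : ℕ × ℕ => (2*p.1, 2*p.2))
    · rintro ⟨i, j⟩ h
      simp only [Finset.mem_filter, Finset.HasAntidiagonal.mem_antidiagonal] at h ⊢
      omega
    · rintro ⟨i, j⟩ h
      simp only [Finset.mem_filter, Finset.HasAntidiagonal.mem_antidiagonal] at h ⊢
      omega
    · rintro ⟨i, j⟩ h
      simp only [Finset.mem_filter, Finset.HasAntidiagonal.mem_antidiagonal] at h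
      simp only [Prod.ext_iff]
      omega
    · rintro ⟨i, j⟩ h
      simp only [Finset.HasAntidiagonal.mem_antidiagonal] at h
      simp only [Prod.ext_iff]
      omega
    · rintro ⟨i, j⟩ h
      simp only [Finset.mem_filter, Finset.HasAntidiagonal.mem_antidiagonal] at h
      obtain ⟨hij, h2i⟩ := h
      have h2j : 2 ∣ j := by omega
      rw [hc, hc, if_pos h2i, if_pos h2j]
  · rw [if_neg hn]
    apply Finset.sum_eq_zero
    rintro ⟨i, j⟩ h
    rw [Finset.HasAntidiagonal.mem_antidiagonal] at h
    by_cases h2i : 2 ∣ i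
    · have hj : ¬ 2 ∣ j := by omega
      rw [hc j, if_neg hj, mul_zero]
    · rw [hc i, if_neg h2i, zero_mul]

theorem stmt4 : phi ^ 2 + (neg_q phi) ^ 2 = 2 * (substPow 2 phi) ^ 2 := by
  ext n
  rw [map_add, coeff_negq_sq, show ((2 : PowerSeries ℤ) * (substPow 2 phi)^2)
      = (PowerSeries.C 2) * (substPow 2 phi)^2 by norm_num,
    PowerSeries.coeff_C_mul, coeff_substPow_sq]
  rcases Nat.even_or_odd n with ⟨m, rfl⟩ | hodd
  · have h2 : 2 ∣ m + m := ⟨m, by ring⟩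
    rw [if_pos h2]
    rw [coeff_phi_sq, coeff_phi_sq]
    rw [show (m+m)/2 = m by omega, show (-1:ℤ)^(m+m) = 1 by
      rw [← two_mul]; exact Even.neg_one_pow ⟨m, by ring⟩]
    rw [show m + m = 2*m by ring, ← T_card]
    ring
  · have h2 : ¬ 2 ∣ n := by
      rcases hodd with ⟨m, rfl⟩; omega
    rw [if_neg h2, hodd.neg_one_pow]
    ring
end

section
/- In ℤ[[q]], the identity ψ(q)^2 = φ(q)·ψ(q^2) holds, where φ(q) = ∑_{n∈ℤ} q^{n^2} and ψ(q) = ∑_{n≥0} q^{n(n+1)/2}. -/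
open PowerSeries
open scoped Classical

section Aux


open Finset
open scoped Classical

lemma tri_unique {k l j : ℕ} (hk : k * (k+1) = j) (hl : l * (l+1) = j) : k = l := by
  rcases lt_trichotomy k l with h | h | h
  · nlinarith
  · exact h
  · nlinarith

lemma card_tri_filter {n j : ℕ} (hj : j ≤ 2 * n) :
    ((Finset.range (n+1)).filter fun k => k * (k+1) = j).card
      = if ∃ k, k * (k+1) = j then 1 else 0 := by
  split_ifs with h
  · obtain ⟨k, hk⟩ := h
    have hkn : k ≤ n := by nlinarith
    rw [Finset.card_eq_one]
    refine ⟨k, ?_⟩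
    ext l
    simp only [Finset.mem_filter, Finset.mem_range, Nat.lt_succ_iff, Finset.mem_singleton]
    constructor
    · rintro ⟨_, hl⟩; exact tri_unique hl hk
    · rintro rfl; exact ⟨hkn, hk⟩
  · rw [Finset.card_eq_zero, Finset.filter_eq_empty_iff]
    intro l _ hl
    exact h ⟨l, hl⟩

lemma card_sq_filter {n i : ℕ} (hi : i ≤ n) :
    ((Finset.Icc (-(n:ℤ)) n).filter fun σ => σ^2 = (i:ℤ)).card
      = if i = 0 then 1 else if IsSquare i then 2 else 0 := by
  split_ifs with h0 hsq
  · subst h0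
    rw [Finset.card_eq_one]
    refine ⟨0, ?_⟩
    ext σ
    simp only [Finset.mem_filter, Finset.mem_Icc, Finset.mem_singleton]
    constructor
    · rintro ⟨_, hσ⟩
      have hσ0 : σ ^ 2 = 0 := by exact_mod_cast hσ
      have := sq_eq_zero_iff.mp hσ0
      simp [this]
    · rintro rfl
      refine ⟨⟨by simp, by simp⟩, by simp⟩
  · obtain ⟨s, hs⟩ := hsq
    have hs1 : 1 ≤ s := by
      rcases Nat.eq_zero_or_pos s with h | h
      · subst h; simp at hs; omega
      · exact h
    have hsn : s ≤ n := by nlinarith [hs, hi, hs1]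
    have : ((Finset.Icc (-(n:ℤ)) n).filter fun σ => σ^2 = (i:ℤ)) = {(s:ℤ), -(s:ℤ)} := by
      ext σ
      simp only [Finset.mem_filter, Finset.mem_Icc, Finset.mem_insert, Finset.mem_singleton]
      constructor
      · rintro ⟨_, hσ⟩
        have hz : (σ - s) * (σ + s) = 0 := by
          have : (s:ℤ) * s = (i:ℤ) := by exact_mod_cast hs.symm
          nlinarith
        rcases mul_eq_zero.mp hz with h | h
        · left; linarith
        · right; linarith
      · rintro (rfl | rfl)
        · refine ⟨⟨by exact_mod_cast (by linarith : -(n:ℤ) ≤ s), by exact_mod_cast hsn⟩, ?_⟩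
          push_cast [hs]; ring
        · refine ⟨⟨by push_cast; omega, by push_cast; omega⟩, ?_⟩
          push_cast [hs]; ring
    rw [this]
    rw [Finset.card_insert_of_notMem, Finset.card_singleton]
    simp only [Finset.mem_singleton]
    intro hc
    omega
  · rw [Finset.card_eq_zero, Finset.filter_eq_empty_iff]
    intro σ _ hσ
    apply hsq
    refine ⟨σ.natAbs, ?_⟩
    have : ((σ.natAbs * σ.natAbs : ℕ) : ℤ) = (i:ℤ) := by
      push_cast
      rw [← Int.natAbs_mul_self, ← sq] at *
      simpa using hσ
    exact_mod_cast this.symm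

open PowerSeries

noncomputable def Aset (n : ℕ) : Finset (ℕ × ℕ) :=
  (Finset.range (n+1) ×ˢ Finset.range (n+1)).filter
    fun p => p.1 * (p.1+1) + p.2 * (p.2+1) = 2*n

noncomputable def Bset (n : ℕ) : Finset (ℤ × ℕ) :=
  (Finset.Icc (-(n:ℤ)) n ×ˢ Finset.range (n+1)).filter
    fun q => q.1^2 + (q.2 : ℤ) * (q.2+1) = n

lemma substPow_coeff (j : ℕ) :
    PowerSeries.coeff j (substPow 2 psi) = if ∃ k, k * (k+1) = j then 1 else 0 := by
  simp only [substPow, psi, coeff_mk]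
  rcases Nat.even_or_odd j with ⟨m, hm⟩ | ⟨m, hm⟩
  · have h2 : 2 ∣ j := ⟨m, by omega⟩
    rw [if_pos h2]
    have : 2 * (j / 2) = j := by omega
    rw [this]
  · have h2 : ¬ (2 ∣ j) := by omega
    rw [if_neg h2, eq_comm]
    rw [if_neg]
    rintro ⟨k, hk⟩
    rcases Nat.even_mul_succ_self k with ⟨x, hx⟩
    omega

lemma lhs_card (n : ℕ) : PowerSeries.coeff n (psi ^ 2) = ((Aset n).card : ℤ) := by
  rw [pow_two, PowerSeries.coeff_mul]
  have hmap : ∀ q ∈ Aset n,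
      (q.1 * (q.1+1) / 2, q.2 * (q.2+1) / 2) ∈ Finset.HasAntidiagonal.antidiagonal n := by
    rintro ⟨a, b⟩ hq
    simp only [Aset, Finset.mem_filter] at hq
    rcases Nat.even_mul_succ_self a with ⟨x, hx⟩
    rcases Nat.even_mul_succ_self b with ⟨y, hy⟩
    simp only [Finset.HasAntidiagonal.mem_antidiagonal]
    omega
  rw [Finset.card_eq_sum_card_fiberwise hmap]
  push_cast
  refine Finset.sum_congr rfl ?_
  rintro ⟨i, j⟩ hp
  simp only [Finset.HasAntidiagonal.mem_antidiagonal] at hp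
  have hfib : ((Aset n).filter fun q => (q.1 * (q.1+1) / 2, q.2 * (q.2+1) / 2) = (i, j))
      = ((Finset.range (n+1)).filter fun a => a * (a+1) = 2*i) ×ˢ
        ((Finset.range (n+1)).filter fun b => b * (b+1) = 2*j) := by
    ext ⟨a, b⟩
    simp only [Aset, Finset.mem_filter, Finset.mem_product, Finset.mem_range, Prod.mk.injEq]
    rcases Nat.even_mul_succ_self a with ⟨x, hx⟩
    rcases Nat.even_mul_succ_self b with ⟨y, hy⟩
    constructor
    · rintro ⟨⟨⟨ha, hb⟩, hsum⟩, hi, hj⟩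
      refine ⟨⟨ha, ?_⟩, hb, ?_⟩ <;> omega
    · rintro ⟨⟨ha, hi⟩, hb, hj⟩
      refine ⟨⟨⟨ha, hb⟩, by omega⟩, by omega, by omega⟩
  rw [hfib, Finset.card_product, card_tri_filter (by omega), card_tri_filter (by omega)]
  simp only [psi, coeff_mk]
  push_cast
  split_ifs <;> ring

lemma rhs_card (n : ℕ) :
    PowerSeries.coeff n (phi * substPow 2 psi) = ((Bset n).card : ℤ) := by
  rw [PowerSeries.coeff_mul]
  have hmap : ∀ q ∈ Bset n,
      ((q.1^2).toNat, q.2 * (q.2+1)) ∈ Finset.HasAntidiagonal.antidiagonal n := by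
    rintro ⟨σ, k⟩ hq
    simp only [Bset, Finset.mem_filter] at hq
    have h1 : ((σ^2).toNat : ℤ) = σ^2 := Int.toNat_of_nonneg (sq_nonneg σ)
    simp only [Finset.HasAntidiagonal.mem_antidiagonal]
    have := hq.2
    have : ((σ^2).toNat + k * (k+1) : ℤ) = (n : ℤ) := by push_cast [h1]; linarith [hq.2]
    exact_mod_cast this
  rw [Finset.card_eq_sum_card_fiberwise hmap]
  push_cast
  refine Finset.sum_congr rfl ?_
  rintro ⟨i, j⟩ hp
  simp only [Finset.HasAntidiagonal.mem_antidiagonal] at hp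
  have hfib : ((Bset n).filter fun q => ((q.1^2).toNat, q.2 * (q.2+1)) = (i, j))
      = ((Finset.Icc (-(n:ℤ)) n).filter fun σ => σ^2 = (i:ℤ)) ×ˢ
        ((Finset.range (n+1)).filter fun k => k * (k+1) = j) := by
    ext ⟨σ, k⟩
    simp only [Bset, Finset.mem_filter, Finset.mem_product, Prod.mk.injEq]
    have h1 : ((σ^2).toNat : ℤ) = σ^2 := Int.toNat_of_nonneg (sq_nonneg σ)
    constructor
    · rintro ⟨⟨⟨hσ, hk⟩, hsum⟩, hi, hj⟩
      refine ⟨⟨hσ, ?_⟩, hk, hj⟩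
      rw [← h1, hi]
    · rintro ⟨⟨hσ, hi⟩, hk, hj⟩
      have hi' : (σ^2).toNat = i := by rw [← h1] at hi; exact_mod_cast hi
      refine ⟨⟨⟨hσ, hk⟩, by rw [hi, ← hp, ← hj]; push_cast; ring⟩, hi', hj⟩
  rw [hfib, Finset.card_product, card_tri_filter (by omega), card_sq_filter (by omega)]
  simp only [phi, coeff_mk, substPow_coeff]
  push_cast
  split_ifs <;> ring

noncomputable def Fm (p : ℕ × ℕ) : ℤ × ℕ :=
  if (p.1 + p.2) % 2 = 0 then (((p.1:ℤ) - p.2)/2, (p.1+p.2)/2)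
  else if p.2 < p.1 then ((((p.1+p.2+1)/2 : ℕ) : ℤ), (p.1 - p.2)/2)
  else (-(((p.1+p.2+1)/2 : ℕ) : ℤ), (p.2 - p.1)/2)

noncomputable def Gm (q : ℤ × ℕ) : ℕ × ℕ :=
  if q.1.natAbs ≤ q.2 then (((q.2:ℤ) + q.1).toNat, ((q.2:ℤ) - q.1).toNat)
  else if 0 ≤ q.1 then (q.1.natAbs + q.2, q.1.natAbs - (q.2+1))
  else (q.1.natAbs - (q.2+1), q.1.natAbs + q.2)

lemma int_le_sq (x : ℤ) : x ≤ x^2 := by nlinarith [sq_nonneg (2*x - 1)]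
lemma int_neg_le_sq (x : ℤ) : -x ≤ x^2 := by nlinarith [sq_nonneg (2*x + 1)]
lemma int_le_mul_succ (k : ℕ) : (k:ℤ) ≤ (k:ℤ)*((k:ℤ)+1) := by
  have hk0 : (0:ℤ) ≤ (k:ℤ) := Int.natCast_nonneg k
  nlinarith
lemma int_mul_succ_nonneg (k : ℕ) : (0:ℤ) ≤ (k:ℤ)*((k:ℤ)+1) := by
  have hk0 : (0:ℤ) ≤ (k:ℤ) := Int.natCast_nonneg k
  nlinarith

lemma Fm_mem {n : ℕ} {p : ℕ × ℕ} (hp : p ∈ Aset n) : Fm p ∈ Bset n := by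
  obtain ⟨a, b⟩ := p
  simp only [Aset, Finset.mem_filter, Finset.mem_product, Finset.mem_range] at hp
  obtain ⟨-, heq⟩ := hp
  have heqZ : (a:ℤ)*(a+1) + (b:ℤ)*(b+1) = 2*(n:ℤ) := by exact_mod_cast heq
  simp only [Bset, Finset.mem_filter, Finset.mem_product, Finset.mem_Icc, Finset.mem_range,
    Nat.lt_succ_iff, Fm]
  split_ifs with h1 h2
  · set σ : ℤ := ((a:ℤ) - b)/2 with hσdef
    set k : ℕ := (a+b)/2 with hkdef
    have hσ : 2*σ = (a:ℤ) - b := by omega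
    have hk : 2*(k:ℤ) = (a:ℤ) + b := by omega
    have key : σ^2 + (k:ℤ)*((k:ℤ)+1) = (n:ℤ) := by
      have h4 : 4*(σ^2 + (k:ℤ)*((k:ℤ)+1)) = 4*(n:ℤ) := by
        linear_combination (2*σ + ((a:ℤ) - b)) * hσ + (2*(k:ℤ) + (a:ℤ)+(b:ℤ)+2) * hk + 2*heqZ
      linarith
    have hσb : σ ≤ σ^2 := int_le_sq σ
    have hσb' : -σ ≤ σ^2 := int_neg_le_sq σ
    have hkb : (k:ℤ) ≤ (k:ℤ)*((k:ℤ)+1) := int_le_mul_succ k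
    have hknn : (0:ℤ) ≤ (k:ℤ)*((k:ℤ)+1) := int_mul_succ_nonneg k
    have hσnn : (0:ℤ) ≤ σ^2 := sq_nonneg σ
    refine ⟨⟨⟨by linarith, by linarith⟩, by exact_mod_cast (by linarith : (k:ℤ) ≤ n)⟩, key⟩
  · set σ : ℤ := (((a+b+1)/2 : ℕ) : ℤ) with hσdef
    set k : ℕ := (a - b)/2 with hkdef
    have hσ : 2*σ = (a:ℤ) + b + 1 := by omega
    have hk : 2*(k:ℤ) + 1 = (a:ℤ) - b := by omega
    have key : σ^2 + (k:ℤ)*((k:ℤ)+1) = (n:ℤ) := by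
      have h4 : 4*(σ^2 + (k:ℤ)*((k:ℤ)+1)) = 4*(n:ℤ) := by
        linear_combination (2*σ + ((a:ℤ)+b+1)) * hσ + (2*(k:ℤ)+1 + (a:ℤ)-(b:ℤ)) * hk + 2*heqZ
      linarith
    have hσb : σ ≤ σ^2 := int_le_sq σ
    have hσb' : -σ ≤ σ^2 := int_neg_le_sq σ
    have hkb : (k:ℤ) ≤ (k:ℤ)*((k:ℤ)+1) := int_le_mul_succ k
    have hknn : (0:ℤ) ≤ (k:ℤ)*((k:ℤ)+1) := int_mul_succ_nonneg k
    have hσnn : (0:ℤ) ≤ σ^2 := sq_nonneg σ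
    refine ⟨⟨⟨by linarith, by linarith⟩, by exact_mod_cast (by linarith : (k:ℤ) ≤ n)⟩, key⟩
  · set σ : ℤ := -(((a+b+1)/2 : ℕ) : ℤ) with hσdef
    set k : ℕ := (b - a)/2 with hkdef
    have hσ : 2*σ = -((a:ℤ) + b + 1) := by omega
    have hk : 2*(k:ℤ) + 1 = (b:ℤ) - a := by omega
    have key : σ^2 + (k:ℤ)*((k:ℤ)+1) = (n:ℤ) := by
      have h4 : 4*(σ^2 + (k:ℤ)*((k:ℤ)+1)) = 4*(n:ℤ) := by
        linear_combination (2*σ - ((a:ℤ)+b+1)) * hσ + (2*(k:ℤ)+1 + (b:ℤ)-(a:ℤ)) * hk + 2*heqZ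
      linarith
    have hσb : σ ≤ σ^2 := int_le_sq σ
    have hσb' : -σ ≤ σ^2 := int_neg_le_sq σ
    have hkb : (k:ℤ) ≤ (k:ℤ)*((k:ℤ)+1) := int_le_mul_succ k
    have hknn : (0:ℤ) ≤ (k:ℤ)*((k:ℤ)+1) := int_mul_succ_nonneg k
    have hσnn : (0:ℤ) ≤ σ^2 := sq_nonneg σ
    refine ⟨⟨⟨by linarith, by linarith⟩, by exact_mod_cast (by linarith : (k:ℤ) ≤ n)⟩, key⟩

lemma Gm_mem {n : ℕ} {q : ℤ × ℕ} (hq : q ∈ Bset n) : Gm q ∈ Aset n := by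
  obtain ⟨σ, k⟩ := q
  simp only [Bset, Finset.mem_filter, Finset.mem_product, Finset.mem_Icc, Finset.mem_range] at hq
  obtain ⟨-, heq⟩ := hq
  simp only [Aset, Finset.mem_filter, Finset.mem_product, Finset.mem_range, Nat.lt_succ_iff, Gm]
  split_ifs with h1 h2
  · set a : ℕ := ((k:ℤ) + σ).toNat with hadef
    set b : ℕ := ((k:ℤ) - σ).toNat with hbdef
    have haZ : (a:ℤ) = (k:ℤ) + σ := by omega
    have hbZ : (b:ℤ) = (k:ℤ) - σ := by omega
    have key : (a:ℤ)*((a:ℤ)+1) + (b:ℤ)*((b:ℤ)+1) = 2*(n:ℤ) := by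
      linear_combination ((a:ℤ) + (k:ℤ) + σ + 1) * haZ + ((b:ℤ) + (k:ℤ) - σ + 1) * hbZ + 2*heq
    have keyN : a*(a+1) + b*(b+1) = 2*n := by exact_mod_cast key
    have ha : a ≤ n := by nlinarith
    have hb : b ≤ n := by nlinarith
    exact ⟨⟨ha, hb⟩, keyN⟩
  · set a : ℕ := σ.natAbs + k with hadef
    set b : ℕ := σ.natAbs - (k+1) with hbdef
    have haZ : (a:ℤ) = σ + k := by omega
    have hbZ : (b:ℤ) = σ - k - 1 := by omega
    have key : (a:ℤ)*((a:ℤ)+1) + (b:ℤ)*((b:ℤ)+1) = 2*(n:ℤ) := by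
      linear_combination ((a:ℤ) + σ + (k:ℤ) + 1) * haZ + ((b:ℤ) + σ - (k:ℤ)) * hbZ + 2*heq
    have keyN : a*(a+1) + b*(b+1) = 2*n := by exact_mod_cast key
    have ha : a ≤ n := by nlinarith
    have hb : b ≤ n := by nlinarith
    exact ⟨⟨ha, hb⟩, keyN⟩
  · set a : ℕ := σ.natAbs - (k+1) with hadef
    set b : ℕ := σ.natAbs + k with hbdef
    have haZ : (a:ℤ) = -σ - k - 1 := by omega
    have hbZ : (b:ℤ) = -σ + k := by omega
    have key : (a:ℤ)*((a:ℤ)+1) + (b:ℤ)*((b:ℤ)+1) = 2*(n:ℤ) := by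
      linear_combination ((a:ℤ) - σ - (k:ℤ)) * haZ + ((b:ℤ) - σ + (k:ℤ) + 1) * hbZ + 2*heq
    have keyN : a*(a+1) + b*(b+1) = 2*n := by exact_mod_cast key
    have ha : a ≤ n := by nlinarith
    have hb : b ≤ n := by nlinarith
    exact ⟨⟨ha, hb⟩, keyN⟩

lemma Gm_Fm {p : ℕ × ℕ} : Gm (Fm p) = p := by
  obtain ⟨a, b⟩ := p
  simp only [Fm, Gm]
  split_ifs <;>
    · simp only [Prod.mk.injEq] at *
      constructor <;> omega

lemma Fm_Gm {q : ℤ × ℕ} : Fm (Gm q) = q := by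
  obtain ⟨σ, k⟩ := q
  simp only [Fm, Gm]
  split_ifs <;>
    · simp only [Prod.mk.injEq] at *
      constructor <;> omega

lemma AB_card (n : ℕ) : (Aset n).card = (Bset n).card :=
  Finset.card_bij' (fun p _ => Fm p) (fun q _ => Gm q)
    (fun p hp => Fm_mem hp) (fun q hq => Gm_mem hq)
    (fun p _ => Gm_Fm) (fun q _ => Fm_Gm)


theorem stmt5 : psi ^ 2 = phi * substPow 2 psi := by
  ext n
  rw [lhs_card, rhs_card, AB_card]

end Aux
end

section
/- Modulo 8, the reciprocal of f_1^2/f_2 satisfies f_2/f_1^2 ≡ 1 - 2∑_{n≥1}(-1)^n q^{n^2} + 4∑_{n≥1} q^{2n^2} (mod 8), i.e., all coefficients of the difference are divisible by 8. -/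
open PowerSeries
open scoped Classical

/-- `∑_{n ≥ 1} (-1)^n q^{n^2}`. -/
noncomputable def S1 : PowerSeries ℤ :=
  PowerSeries.mk fun m =>
    if m ≠ 0 ∧ Nat.sqrt m * Nat.sqrt m = m then (-1 : ℤ) ^ Nat.sqrt m else 0

/-- `∑_{n ≥ 1} q^{2 n^2}`. -/
noncomputable def S2 : PowerSeries ℤ :=
  PowerSeries.mk fun m => if ∃ k, 1 ≤ k ∧ 2 * (k * k) = m then (1 : ℤ) else 0

noncomputable abbrev R' : Type := PowerSeries ℤ

/-- Gaussian binomial `C(n,r)` in the variable `X^2`. -/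
noncomputable def qb : ℕ → ℕ → R'
  | _, 0 => 1
  | 0, _+1 => 0
  | n+1, r+1 => qb n (r+1) + X^(2*(n-r)) * qb n r

@[simp] lemma qb_zero_right (n : ℕ) : qb n 0 = 1 := by cases n <;> rfl

@[simp] lemma qb_zero_succ (r : ℕ) : qb 0 (r+1) = 0 := rfl

lemma qb_succ_succ (n r : ℕ) : qb (n+1) (r+1) = qb n (r+1) + X^(2*(n-r)) * qb n r := rfl

lemma qb_eq_zero : ∀ n r : ℕ, n < r → qb n r = 0 := by
  intro n
  induction n with
  | zero => intro r h; match r, h with | r+1, _ => rfl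
  | succ n ih =>
    intro r h
    match r, h with
    | r+1, h =>
      rw [qb_succ_succ, ih (r+1) (by omega), ih r (by omega)]
      ring

@[simp] lemma qb_self : ∀ n : ℕ, qb n n = 1 := by
  intro n
  induction n with
  | zero => rfl
  | succ n ih => rw [qb_succ_succ, qb_eq_zero n (n+1) (by omega), ih]; simp

lemma qb_pascal2 : ∀ n r : ℕ, qb (n+1) (r+1) = X^(2*(r+1)) * qb n (r+1) + qb n r := by
  intro n
  induction n with
  | zero =>
    intro r
    cases r with
    | zero =>
      have : qb 1 1 = 1 := qb_self 1
      rw [this]; simp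
    | succ s =>
      rw [qb_succ_succ, qb_eq_zero 0 (s+2) (by omega), qb_eq_zero 0 (s+1) (by omega)]
      simp
  | succ n ih =>
    intro r
    cases r with
    | zero =>
      have d2 : qb (n+1+1) (0+1) = qb (n+1) (0+1) + X^(2*n) * X^2 * qb (n+1) 0 := by
        rw [qb_succ_succ (n+1) 0, show 2*(n+1-0) = 2*n + 2 from by omega, pow_add]
      have d1 : qb (n+1) (0+1) = qb n (0+1) + X^(2*n) * qb n 0 := by
        rw [qb_succ_succ n 0, show 2*(n-0) = 2*n from by omega]
      have k := ih 0
      rw [qb_zero_right] at *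
      linear_combination d2 + k - X^2 * d1
    | succ s =>
      by_cases hs : s + 1 ≤ n
      · obtain ⟨t, rfl⟩ := Nat.exists_eq_add_of_le hs
        have d2 : qb (s+1+t+1+1) (s+1+1) = qb (s+1+t+1) (s+1+1)
            + X^(2*t) * X^2 * qb (s+1+t+1) (s+1) := by
          rw [qb_succ_succ (s+1+t+1) (s+1), show 2*(s+1+t+1-(s+1)) = 2*t+2 from by omega, pow_add]
        have d1 : qb (s+1+t+1) (s+1+1) = qb (s+1+t) (s+1+1) + X^(2*t) * qb (s+1+t) (s+1) := by
          rw [qb_succ_succ (s+1+t) (s+1), show 2*(s+1+t-(s+1)) = 2*t from by omega]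
        have d0 : qb (s+1+t+1) (s+1) = qb (s+1+t) (s+1) + X^(2*t) * X^2 * qb (s+1+t) s := by
          rw [qb_succ_succ (s+1+t) s, show 2*(s+1+t-s) = 2*t+2 from by omega, pow_add]
        have k1 := ih (s+1)
        have k0 := ih s
        linear_combination d2 + k1 + X^(2*t)*X^2*k0 - X^(2*(s+1+1))*d1 - d0
      · have hz1 : qb (n+1) (s+1+1) = 0 := qb_eq_zero _ _ (by omega)
        rw [qb_succ_succ (n+1) (s+1), hz1]
        by_cases hn : n = s
        · subst hn
          rw [show 2*(n+1-(n+1)) = 0 from by omega, qb_self]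
          ring
        · rw [qb_eq_zero (n+1) (s+1) (by omega)]
          ring

lemma prodX_congr {r : ℕ} (f g : ℕ → ℕ) (h : ∀ i < r, f i = g i) :
    ∏ i ∈ Finset.range r, (1 - (X:R')^(f i)) = ∏ i ∈ Finset.range r, (1 - (X:R')^(g i)) :=
  Finset.prod_congr rfl fun i hi => by rw [h i (Finset.mem_range.mp hi)]

lemma qb_symm : ∀ n r : ℕ, r ≤ n → qb n (n - r) = qb n r := by
  intro n
  induction n with
  | zero => intro r hr; rcases Nat.le_zero.mp hr with rfl; rfl
  | succ n ih =>
    intro r hr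
    cases r with
    | zero => rw [Nat.sub_zero, qb_self, qb_zero_right]
    | succ s =>
      by_cases hs : s + 1 ≤ n
      · obtain ⟨t, rfl⟩ := Nat.exists_eq_add_of_le hs
        have h1 : s+1+t+1 - (s+1) = t+1 := by omega
        rw [h1, qb_pascal2 (s+1+t) t, qb_succ_succ (s+1+t) s]
        have e1 : qb (s+1+t) (t+1) = qb (s+1+t) s := by
          have := ih s (by omega)
          rwa [show s+1+t-s = t+1 from by omega] at this
        have e2 : qb (s+1+t) t = qb (s+1+t) (s+1) := by
          have := ih (s+1) (by omega)
          rwa [show s+1+t-(s+1) = t from by omega] at this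
        rw [e1, e2, show 2*(s+1+t-s) = 2*(t+1) from by omega]
        ring
      · have hn : n = s := by omega
        subst hn
        rw [Nat.sub_self, qb_zero_right, qb_self]

lemma qb_prodform : ∀ n r : ℕ, r ≤ n →
    qb n r * ∏ i ∈ Finset.range r, (1 - (X:R')^(2*(i+1)))
      = ∏ i ∈ Finset.range r, (1 - (X:R')^(2*(n-r+i+1))) := by
  intro n
  induction n with
  | zero =>
    intro r hr
    rcases Nat.le_zero.mp hr with rfl
    simp
  | succ n ih =>
    intro r hr
    cases r with
    | zero => simp
    | succ s =>
      by_cases hs : s + 1 ≤ n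
      · obtain ⟨t, rfl⟩ := Nat.exists_eq_add_of_le hs
        have I1 : qb (s+1+t) (s+1) * ∏ i ∈ Finset.range (s+1), (1 - (X:R')^(2*(i+1)))
            = ∏ i ∈ Finset.range (s+1), (1 - (X:R')^(2*(t+i+1))) := by
          rw [ih (s+1) (by omega)]
          exact prodX_congr _ _ (fun i hi => by beta_reduce; omega)
        have I2 : qb (s+1+t) s * ∏ i ∈ Finset.range s, (1 - (X:R')^(2*(i+1)))
            = ∏ i ∈ Finset.range s, (1 - (X:R')^(2*(t+i+2))) := by
          rw [ih s (by omega)]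
          exact prodX_congr _ _ (fun i hi => by beta_reduce; omega)
        have hR : (∏ i ∈ Finset.range (s+1), (1 - (X:R')^(2*(s+1+t+1-(s+1)+i+1))))
            = ∏ i ∈ Finset.range (s+1), (1 - (X:R')^(2*(t+i+2))) :=
          prodX_congr _ _ (fun i hi => by beta_reduce; omega)
        rw [hR, Finset.prod_range_succ (fun i => 1 - (X:R')^(2*(t+i+2))) s]
        rw [qb_succ_succ (s+1+t) s, show 2*(s+1+t-s) = 2*(t+1) from by omega,
          Finset.prod_range_succ (fun i => 1 - (X:R')^(2*(i+1))) s]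
        rw [Finset.prod_range_succ' (fun i => 1 - (X:R')^(2*(t+i+1))) s] at I1
        have h0 : (2:ℕ)*(t+0+1) = 2*(t+1) := by omega
        rw [h0] at I1
        have hc : (∏ i ∈ Finset.range s, (1 - (X:R')^(2*(t+(i+1)+1))))
            = ∏ i ∈ Finset.range s, (1 - (X:R')^(2*(t+i+2))) :=
          prodX_congr _ _ (fun i hi => by beta_reduce; omega)
        rw [hc] at I1
        have hexp : (2:ℕ)*(t+s+2) = 2*(t+1) + 2*(s+1) := by omega
        rw [hexp, pow_add]
        rw [Finset.prod_range_succ (fun i => 1 - (X:R')^(2*(i+1))) s] at I1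
        linear_combination
          I1 + (X:R')^(2*(t+1)) * (1 - (X:R')^(2*(s+1))) * I2
      · have hn : n = s := by omega
        subst hn
        rw [qb_self, one_mul]
        exact prodX_congr _ _ (fun i hi => by beta_reduce; omega)

lemma dist_cast_sq (a b : ℕ) : (((Nat.dist a b)^2 : ℕ) : ℤ) = ((a:ℤ) - b)^2 := by
  rcases le_total a b with h | h
  · rw [Nat.dist_eq_sub_of_le h]; push_cast [h]; ring
  · rw [Nat.dist_eq_sub_of_le_right h]; push_cast [h]; ring

lemma qb_four (n j : ℕ) (hj : j ≤ 2*n+2) :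
    qb (2*n+2) j = (if j = 0 then 0 else qb (2*n) (j-1))
      + (if j ≤ 1 then 0 else X^(2*(2*n+2-j)) * qb (2*n) (j-2))
      + X^(2*j) * qb (2*n) j
      + (if j = 0 then 0 else X^(2*(2*n+1)) * qb (2*n) (j-1)) := by
  match j, hj with
  | 0, _ => simp
  | 1, _ =>
    have p2 : qb (2*n+2) 1 = X^(2*1) * qb (2*n+1) 1 + qb (2*n+1) 0 := qb_pascal2 (2*n+1) 0
    have d : qb (2*n+1) 1 = qb (2*n) 1 + X^(2*(2*n)) * qb (2*n) 0 := by
      have := qb_succ_succ (2*n) 0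
      rwa [show 2*(2*n-0) = 2*(2*n) from by omega] at this
    simp only [if_neg (by omega : ¬(1:ℕ) = 0), if_pos (by omega : (1:ℕ) ≤ 1), qb_zero_right,
      Nat.sub_self, mul_one] at *
    rw [show 2*(2*n+1) = 2*(2*n) + 2*1 from by omega, pow_add]
    linear_combination p2 + X^(2*1) * d
  | (t+2), hj =>
    have p2 : qb (2*n+2) (t+2) = X^(2*(t+2)) * qb (2*n+1) (t+2) + qb (2*n+1) (t+1) :=
      qb_pascal2 (2*n+1) (t+1)
    simp only [if_neg (by omega : ¬(t+2:ℕ) = 0), if_neg (by omega : ¬(t+2:ℕ) ≤ 1),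
      show (t+2)-1 = t+1 from by omega, show (t+2)-2 = t from by omega,
      show 2*(2*n+2-(t+2)) = 2*(2*n-t) from by omega]
    by_cases ht : t + 1 ≤ 2*n
    · have d1 : qb (2*n+1) (t+2) = qb (2*n) (t+2) + X^(2*(2*n-(t+1))) * qb (2*n) (t+1) :=
        qb_succ_succ (2*n) (t+1)
      have d0 : qb (2*n+1) (t+1) = qb (2*n) (t+1) + X^(2*(2*n-t)) * qb (2*n) t :=
        qb_succ_succ (2*n) t
      rw [show 2*(2*n+1) = 2*(t+2) + 2*(2*n-(t+1)) from by omega, pow_add]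
      linear_combination p2 + X^(2*(t+2)) * d1 + d0
    · have ht' : t = 2*n := by omega
      subst ht'
      rw [qb_self, qb_eq_zero (2*n) (2*n+1) (by omega), qb_eq_zero (2*n) (2*n+2) (by omega),
        show 2*(2*n-(2*n)) = 0 from by omega, qb_self]
      ring

noncomputable def tfun (n j : ℕ) : R' := ((-1:ℤ)^(n+j)) • ((X:R')^((Nat.dist n j)^2))

noncomputable def Ssum (n : ℕ) : R' := ∑ j ∈ Finset.range (2*n+1), tfun n j * qb (2*n) j

lemma tfun_succ_succ (n j : ℕ) : tfun (n+1) (j+1) = tfun n j := by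
  unfold tfun
  rw [Nat.dist_succ_succ, show n+1+(j+1) = (n+j)+2 from by omega, pow_add]
  norm_num

lemma dist_cast (a b : ℕ) : ((Nat.dist a b : ℤ))^2 = ((a:ℤ) - b)^2 := by
  rcases le_total a b with h | h
  · rw [Nat.dist_eq_sub_of_le h]; push_cast [h]; ring
  · rw [Nat.dist_eq_sub_of_le_right h]; push_cast [h]; ring

lemma tfun_smul (n j : ℕ) : tfun n j = ((-1:R')^(n+j)) * ((X:R')^((Nat.dist n j)^2)) := by
  unfold tfun
  rw [zsmul_eq_mul]
  push_cast
  ring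

lemma tfun_B (n i : ℕ) (hi : i ≤ 2*n) :
    tfun (n+1) (i+1+1) * X^(2*(2*n-i)) = -(X^(2*n+1) * tfun n i) := by
  rw [tfun_smul, tfun_smul]
  have he : (Nat.dist (n+1) (i+1+1))^2 + 2*(2*n-i) = (2*n+1) + (Nat.dist n i)^2 := by
    zify [hi]
    rw [dist_cast, dist_cast]
    push_cast
    ring
  have hs : (-1:R')^(n+1+(i+1+1)) = -(-1:R')^(n+i) := by
    rw [show n+1+(i+1+1) = (n+i)+3 from by omega, pow_add]
    norm_num
  calc ((-1:R')^(n+1+(i+1+1))) * X^((Nat.dist (n+1) (i+1+1))^2) * X^(2*(2*n-i))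
      = ((-1:R')^(n+1+(i+1+1))) * X^((Nat.dist (n+1) (i+1+1))^2 + 2*(2*n-i)) := by
        rw [pow_add]; ring
    _ = -(X^(2*n+1) * ((-1:R')^(n+i) * X^((Nat.dist n i)^2))) := by
        rw [he, hs, pow_add]; ring

lemma tfun_C (n j : ℕ) :
    tfun (n+1) j * X^(2*j) = -(X^(2*n+1) * tfun n j) := by
  rw [tfun_smul, tfun_smul]
  have he : (Nat.dist (n+1) j)^2 + 2*j = (2*n+1) + (Nat.dist n j)^2 := by
    zify
    rw [dist_cast, dist_cast]
    push_cast
    ring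
  have hs : (-1:R')^(n+1+j) = -(-1:R')^(n+j) := by
    rw [show n+1+j = (n+j)+1 from by omega, pow_add]
    norm_num
  calc ((-1:R')^(n+1+j)) * X^((Nat.dist (n+1) j)^2) * X^(2*j)
      = ((-1:R')^(n+1+j)) * X^((Nat.dist (n+1) j)^2 + 2*j) := by
        rw [pow_add]; ring
    _ = -(X^(2*n+1) * ((-1:R')^(n+j) * X^((Nat.dist n j)^2))) := by
        rw [he, hs, pow_add]; ring

theorem jtp : ∀ n, Ssum n = ∏ j ∈ Finset.range n, (1 - (X:R')^(2*j+1))^2 := by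
  intro n
  induction n with
  | zero =>
    unfold Ssum tfun
    simp
  | succ n ih =>
    have expand : Ssum (n+1) =
        (∑ j ∈ Finset.range (2*n+3), tfun (n+1) j * (if j = 0 then 0 else qb (2*n) (j-1)))
      + (∑ j ∈ Finset.range (2*n+3),
          tfun (n+1) j * (if j ≤ 1 then 0 else X^(2*(2*n+2-j)) * qb (2*n) (j-2)))
      + (∑ j ∈ Finset.range (2*n+3), tfun (n+1) j * (X^(2*j) * qb (2*n) j))
      + (∑ j ∈ Finset.range (2*n+3),
          tfun (n+1) j * (if j = 0 then 0 else X^(2*(2*n+1)) * qb (2*n) (j-1))) := by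
      unfold Ssum
      rw [show 2*(n+1)+1 = 2*n+3 from by omega, show 2*(n+1) = 2*n+2 from by omega,
        ← Finset.sum_add_distrib, ← Finset.sum_add_distrib, ← Finset.sum_add_distrib]
      refine Finset.sum_congr rfl (fun j hj => ?_)
      rw [qb_four n j (by have := Finset.mem_range.mp hj; omega)]
      ring
    have hA : (∑ j ∈ Finset.range (2*n+3), tfun (n+1) j * (if j = 0 then 0 else qb (2*n) (j-1)))
        = Ssum n := by
      rw [Finset.sum_range_succ' _ (2*n+2)]
      simp only [Nat.succ_ne_zero, if_neg, if_pos rfl, Nat.add_sub_cancel, mul_zero, add_zero,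
        reduceIte]
      rw [Finset.sum_range_succ, qb_eq_zero (2*n) (2*n+1) (by omega), mul_zero, add_zero]
      exact Finset.sum_congr rfl (fun i _ => by rw [tfun_succ_succ])
    have hB : (∑ j ∈ Finset.range (2*n+3),
          tfun (n+1) j * (if j ≤ 1 then 0 else X^(2*(2*n+2-j)) * qb (2*n) (j-2)))
        = -(X^(2*n+1) * Ssum n) := by
      rw [Finset.sum_range_succ' _ (2*n+2), Finset.sum_range_succ' _ (2*n+1)]
      rw [if_pos (by omega : (0:ℕ) ≤ 1), if_pos (by omega : (0+1:ℕ) ≤ 1), mul_zero, mul_zero,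
        add_zero, add_zero]
      unfold Ssum
      rw [Finset.mul_sum, ← Finset.sum_neg_distrib]
      refine Finset.sum_congr rfl (fun i hi => ?_)
      have hi' : i ≤ 2*n := by have := Finset.mem_range.mp hi; omega
      rw [if_neg (by omega : ¬ i+1+1 ≤ 1), show i+1+1-2 = i from by omega,
        show 2*(2*n+2-(i+1+1)) = 2*(2*n-i) from by omega, ← mul_assoc, tfun_B n i hi']
      ring
    have hC : (∑ j ∈ Finset.range (2*n+3), tfun (n+1) j * (X^(2*j) * qb (2*n) j))
        = -(X^(2*n+1) * Ssum n) := by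
      rw [Finset.sum_range_succ, Finset.sum_range_succ,
        qb_eq_zero (2*n) (2*n+2) (by omega), qb_eq_zero (2*n) (2*n+1) (by omega)]
      simp only [mul_zero, zero_mul, add_zero]
      unfold Ssum
      rw [Finset.mul_sum, ← Finset.sum_neg_distrib]
      refine Finset.sum_congr rfl (fun j hj => ?_)
      rw [← mul_assoc, tfun_C n j]
      ring
    have hD : (∑ j ∈ Finset.range (2*n+3),
          tfun (n+1) j * (if j = 0 then 0 else X^(2*(2*n+1)) * qb (2*n) (j-1)))
        = X^(2*(2*n+1)) * Ssum n := by
      rw [Finset.sum_range_succ' _ (2*n+2), if_pos rfl, mul_zero, add_zero,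
        Finset.sum_range_succ]
      have htop : tfun (n+1) (2*n+1+1) * (if 2*n+1+1 = 0 then 0
          else X^(2*(2*n+1)) * qb (2*n) (2*n+1+1-1)) = 0 := by
        rw [if_neg (by omega), show 2*n+1+1-1 = 2*n+1 from by omega,
          qb_eq_zero (2*n) (2*n+1) (by omega)]
        ring
      rw [htop, add_zero]
      unfold Ssum
      rw [Finset.mul_sum]
      refine Finset.sum_congr rfl (fun i hi => ?_)
      rw [if_neg (by omega), Nat.add_sub_cancel, tfun_succ_succ]
      ring
    rw [expand, hA, hB, hC, hD, ih, Finset.prod_range_succ]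
    rw [show 2*(2*n+1) = (2*n+1) + (2*n+1) from by omega, pow_add]
    ring

/-! ### low-degree coefficient agreement -/

def lowEq (m : ℕ) (F G : R') : Prop := ∀ i ≤ m, coeff i F = coeff i G

lemma lowEq_refl (m : ℕ) (F : R') : lowEq m F F := fun _ _ => rfl

lemma lowEq_mul {m : ℕ} {F F' G G' : R'} (hF : lowEq m F F') (hG : lowEq m G G') :
    lowEq m (F*G) (F'*G') := by
  intro i hi
  rw [coeff_mul, coeff_mul]
  refine Finset.sum_congr rfl (fun p hp => ?_)
  have hp' := Finset.HasAntidiagonal.mem_antidiagonal.mp hp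
  rw [hF p.1 (by omega), hG p.2 (by omega)]

lemma lowEq_one_sub {m a : ℕ} (ha : m < a) : lowEq m (1 - (X:R')^a) 1 := by
  intro i hi
  rw [map_sub, coeff_X_pow, if_neg (by omega)]
  ring

lemma lowEq_one_prod {m : ℕ} {s : Finset ℕ} (a : ℕ → ℕ) (ha : ∀ k ∈ s, m < a k) :
    lowEq m (∏ k ∈ s, (1 - (X:R')^(a k))) 1 := by
  induction s using Finset.cons_induction with
  | empty => simpa using lowEq_refl m 1
  | cons x s hx ih =>
    rw [Finset.prod_cons]
    have h1 : lowEq m (1 - (X:R')^(a x)) 1 := lowEq_one_sub (ha x (Finset.mem_cons_self x s))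
    have h2 := ih (fun k hk => ha k (Finset.mem_cons_of_mem hk))
    have := lowEq_mul h1 h2
    simpa using this

lemma lowEq_zero_Xmul {m e b : ℕ} {F : R'} (h : lowEq b F 0) (hm : m ≤ e + b) :
    lowEq m ((X:R')^e * F) 0 := by
  intro i hi
  rw [coeff_X_pow_mul']
  split_ifs with he
  · rw [h (i-e) (by omega)]; simp
  · simp

lemma lowEq_sub_zero {m : ℕ} {F G : R'} (h : lowEq m F G) : lowEq m (F - G) 0 := by
  intro i hi
  rw [map_sub, h i hi]
  simp

/-! ### partial products and `f` -/

noncomputable def PP (a N : ℕ) : R' := ∏ k ∈ Finset.Icc 1 N, (1 - (X:R')^(a*k))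

lemma coeff_f_s11 (a i : ℕ) : coeff i (f a) = coeff i (PP a i) := by
  rw [f, coeff_mk, PP]

lemma lowEq_f_PP (a : ℕ) (ha : 1 ≤ a) {m N : ℕ} (hN : m ≤ N) : lowEq m (f a) (PP a N) := by
  intro i hi
  rw [coeff_f_s11]
  have hsplit : PP a N = PP a i * ∏ k ∈ Finset.Ioc i N, (1 - (X:R')^(a*k)) := by
    rw [PP, PP, (by simpa using Finset.Icc_add_one_left_eq_Ioc 0 N : Finset.Icc 1 N = Finset.Ioc 0 N),
      (by simpa using Finset.Icc_add_one_left_eq_Ioc 0 i : Finset.Icc 1 i = Finset.Ioc 0 i),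
      ← Finset.prod_Ioc_consecutive _ (Nat.zero_le i) (le_trans hi hN)]
  rw [hsplit]
  have hextra : lowEq i (∏ k ∈ Finset.Ioc i N, (1 - (X:R')^(a*k))) 1 :=
    lowEq_one_prod _ (fun k hk => by
      have := (Finset.mem_Ioc.mp hk).1
      calc i < k := this
        _ ≤ a*k := Nat.le_mul_of_pos_left k (by omega)
      )
  have := lowEq_mul (lowEq_refl i (PP a i)) hextra
  rw [mul_one] at this
  exact (this i le_rfl).symm

noncomputable def OE (N : ℕ) : R' := ∏ j ∈ Finset.range N, (1 - (X:R')^(2*j+1))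

noncomputable def EE (N : ℕ) : R' := ∏ i ∈ Finset.range N, (1 - (X:R')^(2*(i+1)))

lemma PP2_eq_EE (N : ℕ) : PP 2 N = EE N := by
  induction N with
  | zero => rfl
  | succ N ih =>
    have hE : EE (N+1) = EE N * (1 - (X:R')^(2*(N+1))) :=
      Finset.prod_range_succ (fun i => 1 - (X:R')^(2*(i+1))) N
    rw [PP, Finset.prod_Icc_succ_top (by omega), ← PP, ih, hE]

lemma PP1_split (N : ℕ) : PP 1 (2*N) = OE N * EE N := by
  induction N with
  | zero => simp [PP, OE, EE]
  | succ N ih =>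
    have h1 : PP 1 (2*(N+1)) = PP 1 (2*N) * (1 - (X:R')^(2*N+1)) * (1 - (X:R')^(2*(N+1))) := by
      rw [PP, show 2*(N+1) = (2*N+1)+1 from by omega, Finset.prod_Icc_succ_top (by omega),
        Finset.prod_Icc_succ_top (by omega), ← PP, one_mul, one_mul,
        show 2*N+1+1 = 2*(N+1) from by omega]
    have hE : EE (N+1) = EE N * (1 - (X:R')^(2*(N+1))) :=
      Finset.prod_range_succ (fun i => 1 - (X:R')^(2*(i+1))) N
    have hO : OE (N+1) = OE N * (1 - (X:R')^(2*N+1)) :=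
      Finset.prod_range_succ (fun j => 1 - (X:R')^(2*j+1)) N
    rw [h1, ih, hE, hO]
    ring

lemma lowEq_symm {m : ℕ} {F G : R'} (h : lowEq m F G) : lowEq m G F :=
  fun i hi => (h i hi).symm

lemma lowEq_trans {m : ℕ} {F G H : R'} (h1 : lowEq m F G) (h2 : lowEq m G H) : lowEq m F H :=
  fun i hi => (h1 i hi).trans (h2 i hi)

lemma qbE_one (N : ℕ) : ∀ j ≤ N, lowEq (2*j+1) (qb (2*N) j * EE N) 1 := by
  intro j hj
  have hadd := Finset.prod_range_add (fun i => 1 - (X:R')^(2*(i+1))) j (N-j)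
  rw [show j + (N-j) = N from by omega] at hadd
  rw [EE, hadd, ← mul_assoc, qb_prodform (2*N) j (by omega)]
  have h1 : lowEq (2*j+1) (∏ i ∈ Finset.range j, (1 - (X:R')^(2*(2*N-j+i+1)))) 1 :=
    lowEq_one_prod _ (fun k hk => by
      have := Finset.mem_range.mp hk; omega)
  have h2 : lowEq (2*j+1) (∏ i ∈ Finset.range (N-j), (1 - (X:R')^(2*(j+i+1)))) 1 :=
    lowEq_one_prod _ (fun k hk => by omega)
  have := lowEq_mul h1 h2
  rw [mul_one] at this
  exact this

lemma qbE_one' (N j : ℕ) (hj : j ≤ 2*N) :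
    lowEq (2*(N - Nat.dist N j)+1) (qb (2*N) j * EE N) 1 := by
  rcases le_total j N with h | h
  · rw [Nat.dist_eq_sub_of_le_right h, show N - (N-j) = j from by omega]
    exact qbE_one N j h
  · rw [← qb_symm (2*N) j hj, Nat.dist_eq_sub_of_le h,
      show N - (j-N) = 2*N - j from by omega]
    exact qbE_one N (2*N-j) (by omega)

noncomputable def TT (N : ℕ) : R' := ∑ j ∈ Finset.range (2*N+1), tfun N j

lemma dist_le_of_le {N j : ℕ} (hj : j ≤ 2*N) : Nat.dist N j ≤ N := by
  rcases le_total j N with h | h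
  · rw [Nat.dist_eq_sub_of_le_right h]; omega
  · rw [Nat.dist_eq_sub_of_le h]; omega

lemma lowEq_SsumEE_TT {m N : ℕ} (hm : m < N) : lowEq m (Ssum N * EE N) (TT N) := by
  intro i hi
  rw [Ssum, Finset.sum_mul, TT, map_sum, map_sum]
  refine Finset.sum_congr rfl (fun j hj => ?_)
  have hj' : j ≤ 2*N := by have := Finset.mem_range.mp hj; omega
  have hdN : Nat.dist N j ≤ N := dist_le_of_le hj'
  have h0 : lowEq (2*(N - Nat.dist N j)+1) (qb (2*N) j * EE N - 1) 0 :=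
    lowEq_sub_zero (qbE_one' N j hj')
  have hbound : m ≤ (Nat.dist N j)^2 + (2*(N - Nat.dist N j)+1) := by
    zify [hdN]
    have h1 : (0:ℤ) ≤ ((Nat.dist N j : ℤ) - 1)^2 := sq_nonneg _
    have h2 : (m:ℤ) < N := by exact_mod_cast hm
    nlinarith
  have h1 : lowEq m ((X:R')^((Nat.dist N j)^2) * (qb (2*N) j * EE N - 1)) 0 :=
    lowEq_zero_Xmul h0 hbound
  have key : tfun N j * qb (2*N) j * EE N
      = tfun N j + ((-1:ℤ)^(N+j)) • ((X:R')^((Nat.dist N j)^2) * (qb (2*N) j * EE N - 1)) := by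
    rw [tfun, smul_mul_assoc, smul_mul_assoc, ← smul_add]
    congr 1
    ring
  rw [key, map_add, map_smul, h1 i hi]
  simp

lemma coeff_tfun (N j i : ℕ) :
    coeff i (tfun N j) = if (Nat.dist N j)^2 = i then (-1:ℤ)^(N+j) else 0 := by
  rw [tfun, map_smul, coeff_X_pow]
  by_cases h : i = (Nat.dist N j)^2
  · rw [if_pos h, if_pos h.symm]; simp
  · rw [if_neg h, if_neg (fun hh => h hh.symm)]; simp

noncomputable def Phin : R' := (1:R') + 2 * S1

lemma coeff_Phin (i : ℕ) : coeff i Phin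
    = if i = 0 then 1
      else if Nat.sqrt i * Nat.sqrt i = i then 2 * (-1:ℤ)^(Nat.sqrt i) else 0 := by
  have h2 : (2:R') = C (R := ℤ) 2 := by norm_num
  rw [Phin, map_add, coeff_one, h2, coeff_C_mul, S1, coeff_mk]
  by_cases hi : i = 0
  · subst hi
    simp
  · rw [if_neg hi, if_neg hi, zero_add]
    by_cases hsq : Nat.sqrt i * Nat.sqrt i = i
    · rw [if_pos ⟨hi, hsq⟩, if_pos hsq]
    · rw [if_neg (fun h => hsq h.2), if_neg hsq, mul_zero]

lemma lowEq_TT_Phin {m N : ℕ} (hm : m < N) : lowEq m (TT N) Phin := by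
  intro i hi
  rw [TT, map_sum, coeff_Phin,
    Finset.sum_congr rfl (fun j _ => coeff_tfun N j i)]
  by_cases hi0 : i = 0
  · subst hi0
    rw [if_pos rfl]
    have hterm : ∀ j, (if (Nat.dist N j)^2 = 0 then (-1:ℤ)^(N+j) else 0)
        = if j = N then (-1:ℤ)^(N+j) else 0 := by
      intro j
      by_cases h : j = N
      · subst h; rw [if_pos (by simp [Nat.dist_self]), if_pos rfl]
      · have hpos := Nat.dist_pos_of_ne (fun hh : N = j => h hh.symm)
        rw [if_neg (by positivity), if_neg h]
    rw [Finset.sum_congr rfl (fun j _ => hterm j), Finset.sum_ite_eq' (Finset.range (2*N+1)) N]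
    rw [if_pos (Finset.mem_range.mpr (by omega))]
    rw [show N + N = 2*N from by omega, pow_mul]
    norm_num
  · by_cases hsq : Nat.sqrt i * Nat.sqrt i = i
    · rw [if_neg hi0, if_pos hsq]
      obtain ⟨s, hs⟩ : ∃ s, Nat.sqrt i = s := ⟨_, rfl⟩
      rw [hs] at hsq ⊢
      have hs1 : 1 ≤ s := by
        rcases Nat.eq_zero_or_pos s with h | h
        · exfalso; apply hi0; rw [← hsq, h]
        · exact h
      have hss : s ≤ s * s := Nat.le_mul_of_pos_left s hs1
      have hsN : s < N := by
        calc s ≤ s*s := hss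
          _ = i := hsq
          _ ≤ m := hi
          _ < N := hm
      have hdist : ∀ j, (Nat.dist N j)^2 = i → (Nat.dist N j) = s := by
        intro j hj
        have h2 : i = Nat.dist N j * Nat.dist N j := by rw [← hj]; ring
        rw [← hs, h2, Nat.sqrt_eq]
      have hsub : ({N-s, N+s} : Finset ℕ) ⊆ Finset.range (2*N+1) := by
        intro x hx
        rcases Finset.mem_insert.mp hx with h | h
        · rw [h]; exact Finset.mem_range.mpr (by omega)
        · rw [Finset.mem_singleton.mp h]; exact Finset.mem_range.mpr (by omega)
      have hzero : ∀ j ∈ Finset.range (2*N+1), j ∉ ({N-s, N+s} : Finset ℕ) →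
          (if (Nat.dist N j)^2 = i then (-1:ℤ)^(N+j) else 0) = 0 := by
        intro j _ hj
        rw [if_neg]
        intro hc
        have hd := hdist j hc
        apply hj
        rcases le_total j N with h | h
        · rw [Nat.dist_eq_sub_of_le_right h] at hd
          exact Finset.mem_insert.mpr (Or.inl (by omega))
        · rw [Nat.dist_eq_sub_of_le h] at hd
          refine Finset.mem_insert.mpr (Or.inr (Finset.mem_singleton.mpr (by omega)))
      rw [← Finset.sum_subset hsub hzero]
      rw [Finset.sum_pair (by omega : N-s ≠ N+s)]
      have hd1 : Nat.dist N (N-s) = s := by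
        rw [Nat.dist_eq_sub_of_le_right (by omega)]; omega
      have hd2 : Nat.dist N (N+s) = s := by
        rw [Nat.dist_eq_sub_of_le (by omega)]; omega
      rw [hd1, hd2, if_pos (by rw [pow_two]; exact hsq), if_pos (by rw [pow_two]; exact hsq)]
      rw [show N + (N-s) = 2*(N-s)+s from by omega, show N + (N+s) = 2*N+s from by omega,
        pow_add, pow_add, pow_mul, pow_mul]
      norm_num
      ring
    · rw [if_neg hi0, if_neg hsq]
      refine Finset.sum_eq_zero (fun j _ => ?_)
      rw [if_neg]
      intro hc
      apply hsq
      have h2 : i = Nat.dist N j * Nat.dist N j := by rw [← hc]; ring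
      rw [h2, Nat.sqrt_eq]

theorem gauss : f 1 ^ 2 = f 2 * Phin := by
  ext m
  set N := m + 1 with hN
  have hOE : Ssum N = OE N ^ 2 := by
    rw [jtp N, OE, Finset.prod_pow]
  have hf1 : lowEq m (f 1) (OE N * EE N) := by
    have h := lowEq_f_PP 1 le_rfl (show m ≤ 2*N by omega)
    rwa [PP1_split] at h
  have hf2 : lowEq m (f 2) (EE N) := by
    have h := lowEq_f_PP 2 (by omega) (show m ≤ N by omega)
    rwa [PP2_eq_EE] at h
  have hL : coeff m (f 1 ^ 2) = coeff m ((OE N * EE N) * (OE N * EE N)) := by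
    rw [pow_two]
    exact lowEq_mul hf1 hf1 m le_rfl
  have hPhin : lowEq m (Ssum N * EE N) Phin :=
    lowEq_trans (lowEq_SsumEE_TT (by omega)) (lowEq_TT_Phin (by omega))
  have hR : coeff m (f 2 * Phin) = coeff m (EE N * (Ssum N * EE N)) :=
    lowEq_mul hf2 (lowEq_symm hPhin) m le_rfl
  rw [hL, hR]
  congr 1
  rw [hOE]
  ring

/-! ### final mod 8 assembly -/

lemma isUnit_f1 : IsUnit (f 1) := by
  rw [PowerSeries.isUnit_iff_constantCoeff]
  have h : constantCoeff (f 1) = 1 := by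
    have := coeff_f_s11 1 0
    rw [PowerSeries.coeff_zero_eq_constantCoeff] at this
    rw [this, PP]
    simp
  rw [h]
  exact isUnit_one

lemma isUnit_Phin : IsUnit Phin := by
  rw [PowerSeries.isUnit_iff_constantCoeff]
  have h : constantCoeff Phin = 1 := by
    have := coeff_Phin 0
    rw [PowerSeries.coeff_zero_eq_constantCoeff] at this
    rw [this]
    rfl
  rw [h]
  exact isUnit_one

lemma inv_eq : f 2 * Ring.inverse (f 1) ^ 2 = Ring.inverse Phin := by
  have e1 : f 1 ^ 2 * Ring.inverse (f 1) ^ 2 = 1 := by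
    rw [← mul_pow, Ring.mul_inverse_cancel _ isUnit_f1, one_pow]
  calc f 2 * Ring.inverse (f 1) ^ 2
      = Ring.inverse Phin * (Phin * (f 2 * Ring.inverse (f 1) ^ 2)) := by
        rw [← mul_assoc, Ring.inverse_mul_cancel _ isUnit_Phin, one_mul]
    _ = Ring.inverse Phin * (f 2 * Phin * Ring.inverse (f 1) ^ 2) := by ring
    _ = Ring.inverse Phin * (f 1 ^ 2 * Ring.inverse (f 1) ^ 2) := by rw [← gauss]
    _ = Ring.inverse Phin := by rw [e1, mul_one]

lemma diag_sum (n : ℕ) :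
    ∑ p ∈ (Finset.HasAntidiagonal.antidiagonal n).filter (fun p => p.1 = p.2),
      coeff p.1 S1 * coeff p.2 S1 = coeff n S2 := by
  rcases Nat.even_or_odd n with ⟨t, ht⟩ | hodd
  · have hfilter : (Finset.HasAntidiagonal.antidiagonal n).filter (fun p => p.1 = p.2) = {(t,t)} := by
      ext p
      simp only [Finset.mem_filter, Finset.HasAntidiagonal.mem_antidiagonal, Finset.mem_singleton, Prod.ext_iff]
      constructor
      · rintro ⟨h1, h2⟩; omega
      · rintro ⟨h1, h2⟩; omega
    rw [hfilter, Finset.sum_singleton]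
    rw [S1, S2, coeff_mk, coeff_mk]
    by_cases hc : t ≠ 0 ∧ Nat.sqrt t * Nat.sqrt t = t
    · rw [if_pos hc, if_pos ?side]
      · rw [← pow_add, show Nat.sqrt t + Nat.sqrt t = 2 * Nat.sqrt t from by omega, pow_mul]
        norm_num
      · refine ⟨Nat.sqrt t, ?_, by omega⟩
        rcases Nat.eq_zero_or_pos (Nat.sqrt t) with h | h
        · exfalso; apply hc.1; rw [← hc.2, h]
        · exact h
    · rw [if_neg hc, if_neg ?side2, mul_zero]
      rintro ⟨k, hk1, hk2⟩
      apply hc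
      have hkt : k * k = t := by omega
      constructor
      · intro h0; rw [h0] at hkt; simp at hkt; omega
      · rw [← hkt, Nat.sqrt_eq]
  · obtain ⟨t, ht⟩ := hodd
    have hfilter : (Finset.HasAntidiagonal.antidiagonal n).filter (fun p => p.1 = p.2) = ∅ := by
      ext p
      simp only [Finset.mem_filter, Finset.HasAntidiagonal.mem_antidiagonal, Finset.notMem_empty, iff_false,
        not_and]
      intro h1 h2
      omega
    rw [hfilter, Finset.sum_empty, S2, coeff_mk, if_neg]
    rintro ⟨k, hk1, hk2⟩
    omega

lemma offdiag_dvd (n : ℕ) :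
    (2:ℤ) ∣ ∑ p ∈ (Finset.HasAntidiagonal.antidiagonal n).filter (fun p => ¬ p.1 = p.2),
      coeff p.1 S1 * coeff p.2 S1 := by
  have hz : ((∑ p ∈ (Finset.HasAntidiagonal.antidiagonal n).filter (fun p => ¬ p.1 = p.2),
      coeff p.1 S1 * coeff p.2 S1 : ℤ) : ZMod 2) = 0 := by
    push_cast
    refine Finset.sum_involution (fun p _ => (p.2, p.1)) ?h1 ?h3 ?hmem ?h4
    · intro p ha
      have hcomm : ((coeff p.2 S1 * coeff p.1 S1 : ℤ) : ZMod 2)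
          = ((coeff p.1 S1 * coeff p.2 S1 : ℤ) : ZMod 2) := by
        rw [mul_comm]
      push_cast at hcomm ⊢
      rw [hcomm, ← two_mul, show ((2:ZMod 2)) = 0 from rfl, zero_mul]
    · intro p hp _
      have hp' := Finset.mem_filter.mp hp
      intro hc
      have : p.2 = p.1 := congrArg Prod.fst hc
      exact hp'.2 this.symm
    · intro p hp
      have hp' := Finset.mem_filter.mp hp
      show (p.2, p.1) ∈ _
      refine Finset.mem_filter.mpr ⟨?_, ?_⟩
      · rw [Finset.HasAntidiagonal.mem_antidiagonal]
        have := Finset.HasAntidiagonal.mem_antidiagonal.mp hp'.1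
        omega
      · intro hc; exact hp'.2 hc.symm
    · intro p hp
      rfl
  have h2 := (ZMod.intCast_zmod_eq_zero_iff_dvd _ 2).mp hz
  exact_mod_cast h2

lemma two_dvd_S1sq_sub_S2 (n : ℕ) : (2:ℤ) ∣ coeff n (S1*S1 - S2) := by
  rw [map_sub, coeff_mul,
    ← Finset.sum_filter_add_sum_filter_not (Finset.HasAntidiagonal.antidiagonal n) (fun p => p.1 = p.2),
    diag_sum]
  have h := offdiag_dvd n
  convert h using 1
  ring

lemma eight_dvd_coeff_aux (n : ℕ) :
    (8:ℤ) ∣ coeff n (1 - Phin * (1 - 2 * S1 + 4 * S2)) := by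
  have hD : (1:R') - Phin * (1 - 2 * S1 + 4 * S2)
      = 4 * (S1*S1 - S2) - 8 * (S1*S2) := by
    rw [Phin]; ring
  rw [hD, map_sub]
  have h4 : (4:R') = C (R := ℤ) 4 := by norm_num
  have h8 : (8:R') = C (R := ℤ) 8 := by norm_num
  rw [h4, h8, coeff_C_mul, coeff_C_mul]
  have h2 := two_dvd_S1sq_sub_S2 n
  obtain ⟨c, hc⟩ := h2
  rw [hc]
  exact ⟨c - coeff n (S1*S2), by ring⟩

theorem stmt11 (n : ℕ) :
    (8 : ℤ) ∣ PowerSeries.coeff n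
      (f 2 * Ring.inverse (f 1) ^ 2 - (1 - 2 * S1 + 4 * S2)) := by
  rw [inv_eq]
  have key : Ring.inverse Phin - (1 - 2 * S1 + 4 * S2)
      = Ring.inverse Phin * (1 - Phin * (1 - 2 * S1 + 4 * S2)) := by
    rw [mul_sub, mul_one, ← mul_assoc, Ring.inverse_mul_cancel _ isUnit_Phin, one_mul]
  rw [key, coeff_mul]
  refine Finset.dvd_sum (fun p hp => ?_)
  exact Dvd.dvd.mul_left (eight_dvd_coeff_aux p.2) _
end

section
/- Modulo 64, f_2^8/f_1^{16} ≡ 21 + 12·φ(-q)^2 + 16·φ(q^2) + 16·φ(q^4) (mod 64) in ℤ[[q]], where φ(q) = ∑_{n∈ℤ} q^{n^2} and f_m = ∏_{n≥1}(1 - q^{mn}). -/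
open PowerSeries
open scoped Classical

namespace Oc

noncomputable def P (m N : ℕ) : PowerSeries ℤ :=
  ∏ k ∈ Finset.Icc 1 N, (1 - (X : PowerSeries ℤ) ^ (m * k))

def EqU (n : ℕ) (A B : PowerSeries ℤ) : Prop := ∀ i ≤ n, coeff i A = coeff i B

lemma EqU.refl {n : ℕ} (A : PowerSeries ℤ) : EqU n A A := fun _ _ => rfl

lemma EqU.symm {n : ℕ} {A B : PowerSeries ℤ} (h : EqU n A B) : EqU n B A :=
  fun i hi => (h i hi).symm

lemma EqU.trans {n : ℕ} {A B C : PowerSeries ℤ} (h : EqU n A B) (h' : EqU n B C) :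
    EqU n A C := fun i hi => (h i hi).trans (h' i hi)

lemma EqU.mul {n : ℕ} {A B C D : PowerSeries ℤ} (h1 : EqU n A B) (h2 : EqU n C D) :
    EqU n (A * C) (B * D) := by
  intro i hi
  rw [coeff_mul, coeff_mul]
  refine Finset.sum_congr (Eq.refl _) fun p hp => ?_
  rw [Finset.HasAntidiagonal.mem_antidiagonal] at hp
  rw [h1 p.1 (le_trans (by omega) hi), h2 p.2 (le_trans (by omega) hi)]

lemma EqU_one_sub_pow {n j : ℕ} (h : n < j) : EqU n (1 - (X : PowerSeries ℤ) ^ j) 1 := by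
  intro i hi
  rw [map_sub, coeff_X_pow, if_neg (by omega), sub_zero]

lemma EqU_P {m : ℕ} (hm : 1 ≤ m) {n N N' : ℕ} (h : n ≤ N) (h' : N ≤ N') : EqU n (P m N') (P m N) := by
  induction N' with
  | zero => rw [Nat.le_zero.mp h']; exact EqU.refl _
  | succ K ih =>
    rcases Nat.lt_or_ge N (K+1) with hlt | hge
    · have hNK : N ≤ K := by omega
      have hstep : P m (K+1) = P m K * (1 - (X : PowerSeries ℤ) ^ (m * (K+1))) := by
        simp only [P]
        rw [Finset.prod_Icc_succ_top (by omega)]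
      rw [hstep]
      refine EqU.trans ?_ (ih hNK)
      have hj : n < m * (K+1) := by nlinarith
      have := EqU.mul (EqU.refl (n := n) (P m K)) (EqU_one_sub_pow hj)
      simpa using this
    · have : N = K + 1 := by omega
      subst this; exact EqU.refl _

lemma coeff_f {m n N : ℕ} (hm : 1 ≤ m) (h : n ≤ N) :
    coeff n (f m) = coeff n (P m N) := by
  have h0 : coeff n (f m) = coeff n (P m n) := by
    rw [f, coeff_mk]; rfl
  rw [h0]
  exact (EqU_P hm (le_refl n) h n (le_refl n)).symm

end Oc

namespace Oc

noncomputable def sq : PowerSeries ℤ :=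
  PowerSeries.mk fun n => if n ≠ 0 ∧ IsSquare n then 1 else 0

noncomputable def esq : PowerSeries ℤ :=
  PowerSeries.mk fun n => if n ≠ 0 ∧ IsSquare n ∧ Even n then 1 else 0

noncomputable def tser : PowerSeries ℤ :=
  PowerSeries.mk fun n => if n ≠ 0 ∧ IsSquare n then (-1 : ℤ)^(n+1) else 0

lemma coeff_one (n : ℕ) : coeff n (1 : PowerSeries ℤ) = if n = 0 then 1 else 0 := by
  simpa using PowerSeries.coeff_one n (R := ℤ)

lemma phi_eq : phi = 1 + 2 * sq := by
  ext n
  rw [phi, map_add, coeff_mk, coeff_one]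
  have : coeff n (2 * sq) = 2 * coeff n sq := by
    rw [show (2 : PowerSeries ℤ) = C 2 by simp, coeff_C_mul]
  rw [this, sq, coeff_mk]
  by_cases h0 : n = 0
  · subst h0; simp
  · by_cases hs : IsSquare n <;> simp [h0, hs]

lemma negq_phi_eq : neg_q phi = 1 - 2 * tser := by
  ext n
  rw [neg_q, coeff_rescale, map_sub, coeff_one, phi, coeff_mk]
  have : coeff n (2 * tser) = 2 * coeff n tser := by
    rw [show (2 : PowerSeries ℤ) = C 2 by simp, coeff_C_mul]
  rw [this, tser, coeff_mk]
  by_cases h0 : n = 0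
  · subst h0; simp
  · by_cases hs : IsSquare n <;> simp [h0, hs, pow_succ]
    ring

lemma tser_eq : tser = sq - 2 * esq := by
  ext n
  rw [tser, coeff_mk, map_sub]
  have : coeff n (2 * esq) = 2 * coeff n esq := by
    rw [show (2 : PowerSeries ℤ) = C 2 by simp, coeff_C_mul]
  rw [this, sq, esq, coeff_mk, coeff_mk]
  by_cases h0 : n = 0
  · subst h0; simp
  · by_cases hs : IsSquare n
    · rcases Nat.even_or_odd n with he | ho
      · simp [h0, hs, he, he.neg_one_pow, pow_succ]
      · simp [h0, hs, Nat.not_even_iff_odd.mpr ho, ho.neg_one_pow, pow_succ]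
    · simp [h0, hs]

lemma substPow_add (j : ℕ) (A B : PowerSeries ℤ) :
    substPow j (A + B) = substPow j A + substPow j B := by
  ext n
  rw [substPow, substPow, substPow, map_add, coeff_mk, coeff_mk, coeff_mk, map_add]
  split <;> simp

lemma substPow_two_mul (j : ℕ) (A : PowerSeries ℤ) :
    substPow j (2 * A) = 2 * substPow j A := by
  ext n
  have h2 : ∀ B : PowerSeries ℤ, coeff n (2 * B) = 2 * coeff n B := by
    intro B; rw [show (2 : PowerSeries ℤ) = C 2 by simp, coeff_C_mul]
  have h2' : ∀ m (B : PowerSeries ℤ), coeff m (2 * B) = 2 * coeff m B := by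
    intro m B; rw [show (2 : PowerSeries ℤ) = C 2 by simp, coeff_C_mul]
  rw [substPow, substPow, coeff_mk, h2, coeff_mk, h2' ]
  split <;> simp

lemma substPow_one (j : ℕ) (hj : 1 ≤ j) : substPow j (1 : PowerSeries ℤ) = 1 := by
  ext n
  rw [substPow, coeff_mk, coeff_one]
  by_cases h0 : n = 0
  · subst h0; simp
  · rcases em (j ∣ n) with hd | hd
    · have : n / j ≠ 0 := by
        rcases hd with ⟨c, rfl⟩
        have : c ≠ 0 := by rintro rfl; simp at h0
        rw [Nat.mul_div_cancel_left _ (by omega)]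
        exact this
      simp [hd, h0, coeff_one, this]
    · simp [hd, h0]

lemma substPow_substPow (A : PowerSeries ℤ) :
    substPow 2 (substPow 2 A) = substPow 4 A := by
  ext n
  simp only [substPow, coeff_mk]
  by_cases h4 : (4:ℕ) ∣ n
  · obtain ⟨c, rfl⟩ := h4
    rw [if_pos (show (2:ℕ) ∣ 4*c from ⟨2*c, by ring⟩), show 4*c/2 = 2*c by omega,
        if_pos (show (2:ℕ) ∣ 2*c from ⟨c, rfl⟩), show 2*c/2 = c by omega,
        if_pos (show (4:ℕ) ∣ 4*c from ⟨c, rfl⟩), show 4*c/4 = c by omega]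
  · rw [if_neg h4]
    by_cases h2 : (2:ℕ) ∣ n
    · obtain ⟨c, rfl⟩ := h2
      rw [if_pos (show (2:ℕ) ∣ 2*c from ⟨c, rfl⟩), show 2*c/2 = c by omega,
          if_neg (show ¬ (2:ℕ) ∣ c by omega)]
    · rw [if_neg h2]

lemma substPow_phi (j : ℕ) (hj : 1 ≤ j) : substPow j phi = 1 + 2 * substPow j sq := by
  rw [phi_eq, substPow_add, substPow_one j hj, substPow_two_mul]

lemma diag_filter (n : ℕ) :
    (Finset.HasAntidiagonal.antidiagonal n).filter (fun p => p.1 = p.2) =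
      if 2 ∣ n then {(n/2, n/2)} else ∅ := by
  ext p
  simp only [Finset.mem_filter, Finset.HasAntidiagonal.mem_antidiagonal]
  split <;> simp only [Finset.mem_singleton, Finset.notMem_empty, iff_false] <;>
    [skip; skip] <;> first
    | (constructor
       · rintro ⟨h1, h2⟩
         have : p.1 = n/2 ∧ p.2 = n/2 := by omega
         exact Prod.ext this.1 this.2
       · rintro h
         rw [h]
         constructor
         · simp; omega
         · rfl)
    | (rintro ⟨h1, h2⟩; omega)

lemma coeff_sq_mul (S : PowerSeries ℤ) (n : ℕ) :
    coeff n (S * S) =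
      2 * ∑ p ∈ (Finset.HasAntidiagonal.antidiagonal n).filter (fun p => p.1 < p.2),
            coeff p.1 S * coeff p.2 S
        + (if 2 ∣ n then (coeff (n/2) S)^2 else 0) := by
  rw [coeff_mul]
  have hsplit := Finset.sum_filter_add_sum_filter_not (Finset.HasAntidiagonal.antidiagonal n)
    (fun p => p.1 < p.2) (fun p => coeff p.1 S * coeff p.2 S)
  rw [← hsplit]
  have hsplit2 := Finset.sum_filter_add_sum_filter_not
    ((Finset.HasAntidiagonal.antidiagonal n).filter (fun p => ¬ p.1 < p.2))
    (fun p => p.2 < p.1) (fun p => coeff p.1 S * coeff p.2 S)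
  rw [Finset.filter_filter, Finset.filter_filter] at hsplit2
  rw [← hsplit2]
  have h1 : ∑ p ∈ (Finset.HasAntidiagonal.antidiagonal n).filter (fun p => ¬ p.1 < p.2 ∧ p.2 < p.1),
      coeff p.1 S * coeff p.2 S
      = ∑ p ∈ (Finset.HasAntidiagonal.antidiagonal n).filter (fun p => p.1 < p.2),
      coeff p.1 S * coeff p.2 S := by
    apply Finset.sum_nbij' (fun p => (p.2, p.1)) (fun p => (p.2, p.1)) <;>
      simp only [Finset.mem_filter, Finset.HasAntidiagonal.mem_antidiagonal] <;> intros <;>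
      first | omega | simp | (rw [mul_comm])
  have h2 : (Finset.HasAntidiagonal.antidiagonal n).filter (fun p => ¬ p.1 < p.2 ∧ ¬ p.2 < p.1)
      = (Finset.HasAntidiagonal.antidiagonal n).filter (fun p => p.1 = p.2) := by
    apply Finset.filter_congr
    intros; constructor <;> intro <;> omega
  rw [h1, h2, diag_filter]
  split <;> simp [pow_two] <;> ring

lemma frob (S : PowerSeries ℤ) : ∃ T, S * S = substPow 2 S + 2 * T := by
  have key : ∀ n, 2 ∣ (coeff n (S * S) - coeff n (substPow 2 S)) := by
    intro n
    rw [coeff_sq_mul, substPow, coeff_mk]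
    set a := coeff (n/2) S with ha
    set s0 := ∑ p ∈ (Finset.HasAntidiagonal.antidiagonal n).filter (fun p => p.1 < p.2),
            coeff p.1 S * coeff p.2 S with hs0
    by_cases h2 : (2:ℕ) ∣ n
    · rw [if_pos h2, if_pos h2]
      have hdvd : 2 ∣ a^2 - a := by
        obtain ⟨c, hc⟩ := Int.even_mul_succ_self (a - 1)
        exact ⟨c, by linear_combination hc⟩
      obtain ⟨c, hc⟩ := hdvd
      exact ⟨s0 + c, by linear_combination hc⟩
    · rw [if_neg h2, if_neg h2]
      exact ⟨s0, by ring⟩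
  refine ⟨PowerSeries.mk fun n => (coeff n (S * S) - coeff n (substPow 2 S)) / 2, ?_⟩
  ext n
  rw [map_add]
  have h2 : coeff n (2 * PowerSeries.mk fun n =>
      (coeff n (S * S) - coeff n (substPow 2 S)) / 2)
      = 2 * ((coeff n (S * S) - coeff n (substPow 2 S)) / 2) := by
    rw [show (2 : PowerSeries ℤ) = C 2 by simp, coeff_C_mul, coeff_mk]
  rw [h2, Int.mul_ediv_cancel' (key n)]
  ring

end Oc

namespace Oc

noncomputable def qb : ℕ → ℕ → PowerSeries ℤ
  | _, 0 => 1
  | 0, _+1 => 0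
  | n+1, k+1 => qb n k + X^(2*(k+1)) * qb n (k+1)

@[simp] lemma qb_zero (n : ℕ) : qb n 0 = 1 := by cases n <;> rfl
lemma qb_succ (n k : ℕ) : qb (n+1) (k+1) = qb n k + X^(2*(k+1)) * qb n (k+1) := rfl

lemma qb_of_lt : ∀ {n k : ℕ}, n < k → qb n k = 0
  | 0, _+1, _ => rfl
  | n+1, k+1, h => by
    rw [qb_succ, qb_of_lt (show n < k by omega), qb_of_lt (show n < k+1 by omega)]
    simp

lemma qb_self : ∀ n, qb n n = 1
  | 0 => rfl
  | n+1 => by rw [qb_succ, qb_self n, qb_of_lt (show n < n+1 by omega)]; simp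

lemma qb_one : ∀ n, qb n 1 = ∑ i ∈ Finset.range n, X^(2*i)
  | 0 => by simp [qb_of_lt (show 0 < 1 by omega)]
  | n+1 => by
    rw [qb_succ, qb_one n, qb_zero, Finset.sum_range_succ' (fun i => (X:PowerSeries ℤ)^(2*i)) n,
      Finset.mul_sum]
    simp only [← pow_add]
    have h1 : ∀ i : ℕ, 2*(0+1) + 2*i = 2*(i+1) := by intro i; omega
    simp only [h1]
    have h2 : (2:ℕ)*0 = 0 := rfl
    rw [h2, pow_zero, add_comm]

lemma qb_last : ∀ n, qb (n+1) n = ∑ i ∈ Finset.range (n+1), X^(2*i)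
  | 0 => by simp
  | n+1 => by
    rw [qb_succ, qb_last n, qb_self, Finset.sum_range_succ _ (n+1)]
    ring

lemma qb_B : ∀ n k, qb (n+1) (k+1) = X^(2*(n-k)) * qb n k + qb n (k+1)
  | 0, k => by
    cases k with
    | zero => simp [qb_succ, qb_of_lt (show 0 < 1 by omega)]
    | succ k => simp [qb_of_lt (show (0:ℕ) < k+1 by omega), qb_of_lt (show (0:ℕ) < k+2 by omega),
        qb_of_lt (show (1:ℕ) < k+2 by omega)]
  | n+1, 0 => by
    have e1 : qb (n+2) 1 = qb (n+1) 0 + X^(2*(0+1)) * qb (n+1) 1 := qb_succ _ _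
    rw [e1, qb_zero, qb_one (n+1), Nat.sub_zero, Finset.mul_sum]
    simp only [← pow_add]
    have h1 : ∀ i : ℕ, 2*(0+1) + 2*i = 2*(i+1) := by intro i; omega
    simp only [h1]
    have base : (1 : PowerSeries ℤ) = X^(2*0) := by norm_num
    calc (1: PowerSeries ℤ) + ∑ i ∈ Finset.range (n+1), X^(2*(i+1))
        = ∑ i ∈ Finset.range (n+2), X^(2*i) := by
          rw [Finset.sum_range_succ' (fun i => (X:PowerSeries ℤ)^(2*i)) (n+1)]
          rw [add_comm]; norm_num
      _ = X^(2*(n+1)) * 1 + ∑ i ∈ Finset.range (n+1), X^(2*i) := by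
          rw [Finset.sum_range_succ _ (n+1)]; ring
  | n+1, k+1 => by
    rcases lt_trichotomy k n with hlt | heq | hgt
    · obtain ⟨d, rfl⟩ : ∃ d, n = k + d + 1 := ⟨n - k - 1, by omega⟩
      have e1 : qb (k+d+1+2) (k+2) = qb (k+d+2) (k+1) + X^(2*(k+2)) * qb (k+d+2) (k+2) :=
        qb_succ _ _
      have e2 : qb (k+d+2) (k+1) = X^(2*(d+1)) * qb (k+d+1) k + qb (k+d+1) (k+1) := by
        have := qb_B (k+d+1) k; rwa [show k+d+1-k = d+1 by omega] at this
      have e3 : qb (k+d+2) (k+2) = X^(2*d) * qb (k+d+1) (k+1) + qb (k+d+1) (k+2) := by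
        have := qb_B (k+d+1) (k+1); rwa [show k+d+1-(k+1) = d by omega] at this
      have e4 : qb (k+d+2) (k+1) = qb (k+d+1) k + X^(2*(k+1)) * qb (k+d+1) (k+1) := qb_succ _ _
      have e5 : qb (k+d+2) (k+2) = qb (k+d+1) (k+1) + X^(2*(k+2)) * qb (k+d+1) (k+2) := qb_succ _ _
      rw [show k+d+1+1-(k+1) = d+1 by omega]
      linear_combination e1 + e2 + (X:PowerSeries ℤ)^(2*(k+2)) * e3
        - (X:PowerSeries ℤ)^(2*(d+1)) * e4 - e5
    · subst heq
      rw [qb_self, show k+1-(k+1) = 0 by omega, qb_self,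
        qb_of_lt (show k+1 < k+2 by omega)]
      simp
    · rw [qb_of_lt (show n+1 < k+1 by omega), qb_of_lt (show n+1 < k+2 by omega),
        qb_of_lt (show n+2 < k+2 by omega)]
      simp

lemma pascal2 (n m : ℕ) :
    qb (n+2) (m+2) = X^(2*(n-m)) * qb n m + (1 + X^(2*(n+1))) * qb n (m+1)
      + X^(2*(m+2)) * qb n (m+2) := by
  rcases lt_trichotomy m n with hlt | heq | hgt
  · obtain ⟨d, rfl⟩ : ∃ d, n = m + d + 1 := ⟨n - m - 1, by omega⟩
    have e1 : qb (m+d+1+2) (m+2) = qb (m+d+2) (m+1) + X^(2*(m+2)) * qb (m+d+2) (m+2) :=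
      qb_succ _ _
    have e2 : qb (m+d+2) (m+1) = X^(2*(d+1)) * qb (m+d+1) m + qb (m+d+1) (m+1) := by
      have := qb_B (m+d+1) m; rwa [show m+d+1-m = d+1 by omega] at this
    have e3 : qb (m+d+2) (m+2) = X^(2*d) * qb (m+d+1) (m+1) + qb (m+d+1) (m+2) := by
      have := qb_B (m+d+1) (m+1); rwa [show m+d+1-(m+1) = d by omega] at this
    rw [show m+d+1-m = d+1 by omega]
    linear_combination e1 + e2 + (X:PowerSeries ℤ)^(2*(m+2)) * e3
  · subst heq
    rw [qb_self, qb_self, qb_of_lt (show m < m+1 by omega), qb_of_lt (show m < m+2 by omega),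
      show m-m = 0 by omega]
    simp
  · rw [qb_of_lt hgt, qb_of_lt (show n < m+1 by omega), qb_of_lt (show n < m+2 by omega),
      qb_of_lt (show n+2 < m+2 by omega)]
    simp

end Oc

namespace Oc

lemma P_zero (m : ℕ) : P m 0 = 1 := by simp [P]

lemma P_succ (m N : ℕ) : P m (N+1) = P m N * (1 - X ^ (m * (N+1))) := by
  simp only [P]
  rw [Finset.prod_Icc_succ_top (by omega)]

lemma qb_mul : ∀ n k, k ≤ n → qb n k * P 2 k * P 2 (n-k) = P 2 n := by
  intro n
  induction n with
  | zero => intro k hk; interval_cases k; simp [P_zero]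
  | succ n ih =>
    intro k hk
    cases k with
    | zero => simp [P_zero]
    | succ k =>
      rcases Nat.lt_or_ge k n with hlt | hge
      · obtain ⟨d, rfl⟩ : ∃ d, n = k + d + 1 := ⟨n - k - 1, by omega⟩
        have h1 : P 2 (k+1) = P 2 k * (1 - X ^ (2*(k+1))) := P_succ 2 k
        have h2 : P 2 (d+1) = P 2 d * (1 - X ^ (2*(d+1))) := P_succ 2 d
        have h3 : qb (k+d+1) k * P 2 k * P 2 (d+1) = P 2 (k+d+1) := by
          have := ih k (by omega); rwa [show k+d+1-k = d+1 by omega] at this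
        have h4 : qb (k+d+1) (k+1) * P 2 (k+1) * P 2 d = P 2 (k+d+1) := by
          have := ih (k+1) (by omega); rwa [show k+d+1-(k+1) = d by omega] at this
        have h5 : P 2 (k+d+2) = P 2 (k+d+1) * (1 - X ^ (2*(k+d+2))) := P_succ 2 (k+d+1)
        rw [show k+d+1+1-(k+1) = d+1 by omega, qb_succ]
        linear_combination (qb (k+d+1) k * P 2 (d+1)) * h1
          + ((X:PowerSeries ℤ)^(2*(k+1)) * qb (k+d+1) (k+1) * P 2 (k+1)) * h2
          + (1 - (X:PowerSeries ℤ)^(2*(k+1))) * h3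
          + ((X:PowerSeries ℤ)^(2*(k+1)) * (1 - (X:PowerSeries ℤ)^(2*(d+1)))) * h4 - h5
      · have : k + 1 = n + 1 := by omega
        rw [this, qb_self, show n+1-(n+1) = 0 by omega, P_zero]
        ring

noncomputable def qbz (n : ℕ) (i : ℤ) : PowerSeries ℤ := if 0 ≤ i then qb n i.toNat else 0

lemma qbz_coe (n j : ℕ) : qbz n (j : ℤ) = qb n j := by simp [qbz]

lemma qbz_neg {n : ℕ} {i : ℤ} (h : i < 0) : qbz n i = 0 := by simp [qbz, not_le.mpr h]

lemma qbz_gt {n : ℕ} {i : ℤ} (h : (n:ℤ) < i) : qbz n i = 0 := by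
  rw [qbz, if_pos (by omega)]
  exact qb_of_lt (by omega)

noncomputable def cc (M : ℕ) (k : ℤ) : PowerSeries ℤ :=
  C ((k.negOnePow : ℤˣ) : ℤ) * X^(k.natAbs^2) * qbz (2*M) ((M:ℤ) + k)

lemma cc_zero_low {M : ℕ} {k : ℤ} (h : k < -(M:ℤ)) : cc M k = 0 := by
  rw [cc, qbz_neg (by omega)]; ring

lemma cc_zero_high {M : ℕ} {k : ℤ} (h : (M:ℤ) < k) : cc M k = 0 := by
  rw [cc, qbz_gt (by push_cast; omega)]; ring

lemma sum_shift (r : ℕ) :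
    ∑ i ∈ Finset.range (r+2), (X:PowerSeries ℤ)^(2*i)
      = 1 + X^(2*(r+1)) + X^2 * ∑ i ∈ Finset.range r, (X:PowerSeries ℤ)^(2*i) := by
  rw [Finset.sum_range_succ _ (r+1), Finset.sum_range_succ' (fun i => (X:PowerSeries ℤ)^(2*i)) r,
    Finset.mul_sum]
  simp only [← pow_add]
  have h1 : ∀ i : ℕ, 2 + 2*i = 2*(i+1) := by intro i; omega
  simp only [h1]
  norm_num
  ring

end Oc

namespace Oc

lemma cc_eq (M : ℕ) (k : ℤ) (j : ℕ) (h : (M:ℤ) + k = j) :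
    cc M k = C ((k.negOnePow : ℤˣ) : ℤ) * X^(k.natAbs^2) * qb (2*M) j := by
  rw [cc, h, qbz_coe]

lemma sg_succ (k : ℤ) : C (((k+1).negOnePow : ℤˣ) : ℤ)
    = - C ((k.negOnePow : ℤˣ) : ℤ) := by
  rw [Int.negOnePow_succ]
  push_cast
  rw [map_neg]

lemma sg_pred (k : ℤ) : C (((k-1).negOnePow : ℤˣ) : ℤ)
    = - C ((k.negOnePow : ℤˣ) : ℤ) := by
  have := sg_succ (k-1)
  rw [sub_add_cancel] at this
  rw [this, neg_neg]

lemma cc_rec (M : ℕ) (k : ℤ) :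
    cc (M+1) k = (1 + X^(4*M+2)) * cc M k
      - X^(2*M+1) * (cc M (k+1) + cc M (k-1)) := by
  rcases lt_trichotomy k (-(M:ℤ)) with hlow | heq | hup
  · -- k ≤ -M-1
    rcases eq_or_lt_of_le (show k ≤ -(M:ℤ)-1 by omega) with heq1 | hlt1
    · -- k = -M-1 : boundary p = 0
      rw [cc_eq (M+1) k 0 (by omega), cc_eq M (k+1) 0 (by omega),
        cc_zero_low (show k < -(M:ℤ) by omega), cc_zero_low (show k-1 < -(M:ℤ) by omega)]
      rw [show k+1 = k+1 from rfl, sg_succ k]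
      have habs : (k+1).natAbs = M := by omega
      have habs0 : k.natAbs = M+1 := by omega
      rw [habs, habs0, qb_zero, qb_zero]
      have F : (X:PowerSeries ℤ)^(2*M+1) * X^(M^2) = X^((M+1)^2) := by
        rw [← pow_add]; congr 1; ring
      linear_combination - F
    · -- k < -M-1 : everything 0
      rw [cc_zero_low (show k < -((M:ℤ)+1) by push_cast; omega),
        cc_zero_low (show k < -(M:ℤ) by omega),
        cc_zero_low (show k+1 < -(M:ℤ) by omega),
        cc_zero_low (show k-1 < -(M:ℤ) by omega)]
      push_cast
      ring
  · -- k = -M : p = 1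
    subst heq
    cases M with
    | zero =>
      simp only [Nat.cast_zero, neg_zero]
      rw [cc_eq 1 0 1 (by omega), cc_eq 0 0 0 (by omega),
        cc_zero_high (show ((0:ℕ):ℤ) < 0+1 by omega),
        cc_zero_low (show (0:ℤ)-1 < -((0:ℕ):ℤ) by omega)]
      simp only [Int.negOnePow_zero, Int.natAbs_zero]
      rw [qb_one 2, qb_zero]
      rw [Finset.sum_range_succ, Finset.sum_range_succ, Finset.sum_range_zero]
      simp
    | succ m =>
      push_cast
      rw [cc_eq (m+1+1) (-((m:ℤ)+1)) 1 (by push_cast; omega),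
        cc_eq (m+1) (-((m:ℤ)+1)) 0 (by push_cast; omega),
        cc_eq (m+1) (-((m:ℤ)+1)+1) 1 (by push_cast; omega),
        cc_zero_low (show -((m:ℤ)+1)-1 < -((m+1:ℕ):ℤ) by push_cast; omega)]
      rw [sg_succ (-((m:ℤ)+1))]
      have hab0 : (-((m:ℤ)+1)).natAbs = m+1 := by omega
      have hab1 : (-((m:ℤ)+1)+1).natAbs = m := by omega
      rw [hab0, hab1, qb_zero]
      rw [show 2*(m+1+1) = (2*m+2)+2 from by ring, show 2*(m+1) = 2*m+2 from by ring,
        qb_one ((2*m+2)+2), qb_one (2*m+2), sum_shift (2*m+2)]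
      have F : (X:PowerSeries ℤ)^((2*m+2)+1) * X^(m^2) = X^((m+1)^2) * X^2 := by
        rw [← pow_add, ← pow_add]; congr 1; ring
      linear_combination (C (((-((m:ℤ)+1)).negOnePow : ℤˣ) : ℤ)
        * ∑ i ∈ Finset.range (2*m+2), (X:PowerSeries ℤ)^(2*i)) * F
  · -- k > -M
    rcases lt_trichotomy k (M:ℤ) with hmid | heqM | hbig
    · -- interior: -M < k < M  (so M ≥ 1), p = M+1+k ∈ [2, 2M]
      set j : ℕ := (k + M - 1).toNat with hjdef
      have hj : (j:ℤ) = (M:ℤ) + k - 1 := by omega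
      have hjle : j + 2 ≤ 2*M + 2 := by omega
      set r : ℕ := 2*M - j with hrdef
      have hr : (r:ℤ) = (M:ℤ) - k + 1 := by omega
      have hp := pascal2 (2*M) j
      rw [show 2*M - j = r from rfl] at hp
      rw [cc_eq (M+1) k (j+2) (by push_cast; omega),
        cc_eq M k (j+1) (by push_cast; omega),
        cc_eq M (k+1) (j+2) (by push_cast; omega),
        cc_eq M (k-1) j (by push_cast; omega),
        sg_succ k, sg_pred k]
      have E1 : (k-1).natAbs^2 + (2*M+1) = k.natAbs^2 + 2*r := by
        have : (((k-1).natAbs^2 : ℕ) : ℤ) + (2*(M:ℤ)+1) = ((k.natAbs^2 : ℕ):ℤ) + 2*(r:ℤ) := by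
          push_cast [Int.natAbs_sq]
          rw [sq_abs, sq_abs]
          linear_combination -2*hr
        exact_mod_cast this
      have E2 : (k+1).natAbs^2 + (2*M+1) = k.natAbs^2 + 2*(j+2) := by
        have : (((k+1).natAbs^2 : ℕ) : ℤ) + (2*(M:ℤ)+1) = ((k.natAbs^2 : ℕ):ℤ) + 2*((j:ℤ)+2) := by
          push_cast [Int.natAbs_sq]
          rw [sq_abs, sq_abs]
          linear_combination -2*hj
        exact_mod_cast this
      have F1 : (X:PowerSeries ℤ)^(2*M+1) * X^((k-1).natAbs^2) = X^(k.natAbs^2) * X^(2*r) := by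
        rw [← pow_add, ← pow_add]; congr 1; omega
      have F2 : (X:PowerSeries ℤ)^(2*M+1) * X^((k+1).natAbs^2)
          = X^(k.natAbs^2) * X^(2*(j+2)) := by
        rw [← pow_add, ← pow_add]; congr 1; omega
      have hM2 : 2*(M+1) = 2*M+2 := by ring
      rw [hM2]
      linear_combination (C ((k.negOnePow : ℤˣ) : ℤ) * (X:PowerSeries ℤ)^(k.natAbs^2)) * hp
        - (C ((k.negOnePow : ℤˣ) : ℤ) * qb (2*M) j) * F1
        - (C ((k.negOnePow : ℤˣ) : ℤ) * qb (2*M) (j+2)) * F2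
    · -- k = M, p = 2M+1; here M ≥ 1 since k > -M
      subst heqM
      have hM1 : 1 ≤ M := by omega
      obtain ⟨m, rfl⟩ : ∃ m, M = m + 1 := ⟨M - 1, by omega⟩
      push_cast
      rw [cc_eq (m+1+1) ((m:ℤ)+1) (2*m+3) (by push_cast; omega),
        cc_eq (m+1) ((m:ℤ)+1) (2*m+2) (by push_cast; omega),
        cc_eq (m+1) ((m:ℤ)+1-1) (2*m+1) (by push_cast; omega),
        cc_zero_high (show ((m+1:ℕ):ℤ) < (m:ℤ)+1+1 by push_cast; omega)]
      rw [sg_pred ((m:ℤ)+1)]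
      have hab0 : ((m:ℤ)+1).natAbs = m+1 := by omega
      have hab1 : ((m:ℤ)+1-1).natAbs = m := by omega
      rw [hab0, hab1]
      rw [show 2*(m+1) = 2*m+2 from by ring, qb_self]
      have hqbL : qb (2*(m+1+1)) (2*m+3) = ∑ i ∈ Finset.range (2*m+4), (X:PowerSeries ℤ)^(2*i) := by
        rw [show 2*(m+1+1) = (2*m+3)+1 by ring]
        exact qb_last (2*m+3)
      have hqbR : qb (2*m+2) (2*m+1) = ∑ i ∈ Finset.range (2*m+2), (X:PowerSeries ℤ)^(2*i) := by
        rw [show 2*m+2 = (2*m+1)+1 by ring]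
        exact qb_last (2*m+1)
      rw [hqbL, hqbR, show 2*m+4 = (2*m+2)+2 by ring, sum_shift]
      have F : (X:PowerSeries ℤ)^(2*(m+1)+1) * X^(m^2) = X^((m+1)^2) * X^2 := by
        rw [← pow_add, ← pow_add]; congr 1; ring
      have hcast : 4*(m+1)+2 = 2*((2*m+2)+1) := by ring
      rw [hcast]
      linear_combination (C ((((m:ℤ)+1).negOnePow : ℤˣ) : ℤ)
        * ∑ i ∈ Finset.range (2*m+2), (X:PowerSeries ℤ)^(2*i)) * F
    · -- k > M
      rcases eq_or_lt_of_le (show (M:ℤ)+1 ≤ k by omega) with heq1 | hlt1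
      · -- k = M+1 : p = 2M+2
        rw [cc_eq (M+1) k (2*M+2) (by push_cast; omega),
          cc_zero_high (show (M:ℤ) < k by omega),
          cc_zero_high (show (M:ℤ) < k+1 by omega),
          cc_eq M (k-1) (2*M) (by omega)]
        rw [sg_pred k]
        have hab0 : k.natAbs = M+1 := by omega
        have hab1 : (k-1).natAbs = M := by omega
        rw [hab0, hab1, show 2*(M+1) = (2*M+2) from by ring, qb_self, qb_self]
        have F : (X:PowerSeries ℤ)^(2*M+1) * X^(M^2) = X^((M+1)^2) := by
          rw [← pow_add]; congr 1; ring
        linear_combination - F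
      · -- k ≥ M+2 : all zero
        rw [cc_zero_high (show ((M+1:ℕ):ℤ) < k by push_cast; omega),
          cc_zero_high (show (M:ℤ) < k by omega),
          cc_zero_high (show (M:ℤ) < k+1 by omega),
          cc_zero_high (show (M:ℤ) < k-1 by omega)]
        ring

end Oc

namespace Oc

noncomputable def SS (M : ℕ) : PowerSeries ℤ := ∑ k ∈ Finset.Icc (-(M:ℤ)) (M:ℤ), cc M k

noncomputable def Podd (M : ℕ) : PowerSeries ℤ :=
  ∏ j ∈ Finset.Icc 1 M, (1 - (X:PowerSeries ℤ)^(2*j-1))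

lemma sum_cc_ext (M : ℕ) {s : Finset ℤ} (hs : Finset.Icc (-(M:ℤ)) (M:ℤ) ⊆ s) :
    ∑ k ∈ s, cc M k = SS M := by
  rw [SS]
  symm
  apply Finset.sum_subset hs
  intro x _ hnx
  simp only [Finset.mem_Icc, not_and, not_le] at hnx
  by_cases h : x < -(M:ℤ)
  · exact cc_zero_low h
  · exact cc_zero_high (hnx (by omega))

lemma FG : ∀ M, SS M = (Podd M)^2
  | 0 => by
    rw [SS, Podd]
    norm_num
    rw [cc_eq 0 0 0 (by omega)]
    simp [Int.negOnePow_zero]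
  | M+1 => by
    have ih := FG M
    have hIcc : Finset.Icc (-((M+1:ℕ):ℤ)) ((M+1:ℕ):ℤ) = Finset.Icc (-(M:ℤ)-1) ((M:ℤ)+1) := by
      congr 1 <;> push_cast <;> ring
    have hshift1 : ∑ k ∈ Finset.Icc (-(M:ℤ)-1) ((M:ℤ)+1), cc M (k+1) = SS M := by
      have hm : (Finset.Icc (-(M:ℤ)-1) ((M:ℤ)+1)).map (addRightEmbedding 1)
          = Finset.Icc (-(M:ℤ)) ((M:ℤ)+2) := by
        rw [Finset.map_add_right_Icc]
        congr 1 <;> ring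
      calc ∑ k ∈ Finset.Icc (-(M:ℤ)-1) ((M:ℤ)+1), cc M (k+1)
          = ∑ k ∈ (Finset.Icc (-(M:ℤ)-1) ((M:ℤ)+1)).map (addRightEmbedding 1), cc M k := by
            rw [Finset.sum_map]
            rfl
        _ = ∑ k ∈ Finset.Icc (-(M:ℤ)) ((M:ℤ)+2), cc M k := by rw [hm]
        _ = SS M := sum_cc_ext M (Finset.Icc_subset_Icc (by omega) (by omega))
    have hshift2 : ∑ k ∈ Finset.Icc (-(M:ℤ)-1) ((M:ℤ)+1), cc M (k-1) = SS M := by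
      have hm : (Finset.Icc (-(M:ℤ)-1) ((M:ℤ)+1)).map (addRightEmbedding (-1))
          = Finset.Icc (-(M:ℤ)-2) ((M:ℤ)) := by
        rw [Finset.map_add_right_Icc]
        congr 1 <;> ring
      calc ∑ k ∈ Finset.Icc (-(M:ℤ)-1) ((M:ℤ)+1), cc M (k-1)
          = ∑ k ∈ (Finset.Icc (-(M:ℤ)-1) ((M:ℤ)+1)).map (addRightEmbedding (-1)), cc M k := by
            rw [Finset.sum_map]
            apply Finset.sum_congr (Eq.refl _)
            intros
            simp [addRightEmbedding, sub_eq_add_neg]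
        _ = ∑ k ∈ Finset.Icc (-(M:ℤ)-2) ((M:ℤ)), cc M k := by rw [hm]
        _ = SS M := sum_cc_ext M (Finset.Icc_subset_Icc (by omega) (by omega))
    have hbase : ∑ k ∈ Finset.Icc (-(M:ℤ)-1) ((M:ℤ)+1), cc M k = SS M :=
      sum_cc_ext M (Finset.Icc_subset_Icc (by omega) (by omega))
    have hPodd : Podd (M+1) = Podd M * (1 - X^(2*M+1)) := by
      rw [Podd, Podd, Finset.prod_Icc_succ_top (by omega), show 2*(M+1)-1 = 2*M+1 by omega]
    calc SS (M+1) = ∑ k ∈ Finset.Icc (-(M:ℤ)-1) ((M:ℤ)+1), cc (M+1) k := by rw [SS, hIcc]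
      _ = ∑ k ∈ Finset.Icc (-(M:ℤ)-1) ((M:ℤ)+1),
            ((1 + X^(4*M+2)) * cc M k - X^(2*M+1) * (cc M (k+1) + cc M (k-1))) :=
          Finset.sum_congr (Eq.refl _) (fun k _ => cc_rec M k)
      _ = (1 + X^(4*M+2)) * (∑ k ∈ Finset.Icc (-(M:ℤ)-1) ((M:ℤ)+1), cc M k)
          - X^(2*M+1) * ((∑ k ∈ Finset.Icc (-(M:ℤ)-1) ((M:ℤ)+1), cc M (k+1))
            + (∑ k ∈ Finset.Icc (-(M:ℤ)-1) ((M:ℤ)+1), cc M (k-1))) := by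
          rw [Finset.sum_sub_distrib, ← Finset.mul_sum, ← Finset.mul_sum, Finset.sum_add_distrib]
      _ = (1 + X^(4*M+2)) * SS M - X^(2*M+1) * (SS M + SS M) := by
          rw [hshift1, hshift2, hbase]
      _ = (Podd (M+1))^2 := by
          rw [hPodd, ih]
          ring

lemma P1_split : ∀ M, P 1 (2*M) = Podd M * P 2 M
  | 0 => by simp [P_zero, Podd]
  | M+1 => by
    have h1 : P 1 (2*(M+1)) = P 1 (2*M) * (1 - X^(2*M+1)) * (1 - X^(2*M+2)) := by
      rw [show 2*(M+1) = (2*M+1)+1 by ring, P_succ, P_succ]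
      rw [show 1*((2*M+1)+1) = 2*M+2 by ring, show 1*(2*M+1) = 2*M+1 by ring]
    have h2 : Podd (M+1) = Podd M * (1 - X^(2*M+1)) := by
      rw [Podd, Podd, Finset.prod_Icc_succ_top (by omega), show 2*(M+1)-1 = 2*M+1 by omega]
    have h3 : P 2 (M+1) = P 2 M * (1 - X^(2*M+2)) := by
      rw [P_succ, show 2*(M+1) = 2*M+2 by ring]
    rw [h1, h2, h3, P1_split M]
    ring

end Oc

namespace Oc

lemma coeff_negq_phi (i : ℕ) : coeff i (neg_q phi)
    = (-1)^i * (if i = 0 then 1 else if IsSquare i then 2 else 0) := by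
  rw [neg_q, coeff_rescale, phi, coeff_mk]

lemma neg_one_pow_sq (a : ℕ) : ((-1 : ℤ))^(a^2) = (-1)^a := by
  rcases Nat.even_or_odd a with h | h
  · rw [h.neg_one_pow, (Nat.even_pow.mpr ⟨h, two_ne_zero⟩).neg_one_pow]
  · rw [h.neg_one_pow, (Odd.pow h).neg_one_pow]

lemma gauss : f 1 * f 1 = f 2 * neg_q phi := by
  ext n
  set M := 2*n+1 with hM
  set b : ℕ → ℤ := fun i => coeff i (f 2) with hb
  -- LHS
  have e1 : EqU n (f 1) (P 1 (2*M)) := fun i hi => coeff_f (by omega) (by omega)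
  have l1 : coeff n (f 1 * f 1) = coeff n (P 1 (2*M) * P 1 (2*M)) :=
    (EqU.mul e1 e1) n le_rfl
  have hsplit : P 1 (2*M) * P 1 (2*M) = SS M * (P 2 M * P 2 M) := by
    rw [P1_split M, FG M]; ring
  have hterm : ∀ k ∈ Finset.Icc (-(M:ℤ)) (M:ℤ),
      coeff n (cc M k * (P 2 M * P 2 M))
        = ((k.negOnePow : ℤˣ) : ℤ)
            * (if k.natAbs^2 ≤ n then b (n - k.natAbs^2) else 0) := by
    intro k hk
    simp only [Finset.mem_Icc] at hk
    rw [cc, mul_assoc, mul_assoc, coeff_C_mul, coeff_X_pow_mul']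
    congr 1
    by_cases he : k.natAbs^2 ≤ n
    · rw [if_pos he, if_pos he]
      have hkn : k.natAbs ≤ n := le_trans (Nat.le_self_pow two_ne_zero _) he
      obtain ⟨j, hjz⟩ : ∃ j : ℕ, ((M:ℤ)+k) = (j:ℤ) := ⟨((M:ℤ)+k).toNat, by omega⟩
      have hj1 : n ≤ j := by omega
      have hj2 : j ≤ 2*M := by omega
      have hj3 : n ≤ 2*M - j := by omega
      have hrn : n - k.natAbs^2 ≤ n := by omega
      have c1 : EqU (n - k.natAbs^2) (P 2 M) (P 2 j) :=
        EqU.trans (EqU_P (m := 2) (by omega) le_rfl (show n - k.natAbs^2 ≤ M by omega))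
          (EqU_P (m := 2) (by omega) le_rfl (show n - k.natAbs^2 ≤ j by omega)).symm
      have c2 : EqU (n - k.natAbs^2) (P 2 M) (P 2 (2*M - j)) :=
        EqU.trans (EqU_P (m := 2) (by omega) le_rfl (show n - k.natAbs^2 ≤ M by omega))
          (EqU_P (m := 2) (by omega) le_rfl (show n - k.natAbs^2 ≤ 2*M - j by omega)).symm
      rw [hjz, qbz_coe]
      calc coeff (n - k.natAbs^2) (qb (2*M) j * (P 2 M * P 2 M))
          = coeff (n - k.natAbs^2) (qb (2*M) j * (P 2 j * P 2 (2*M - j))) :=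
            (EqU.mul (EqU.refl _) (EqU.mul c1 c2)) _ le_rfl
        _ = coeff (n - k.natAbs^2) (P 2 (2*M)) := by
            rw [show qb (2*M) j * (P 2 j * P 2 (2*M - j))
              = qb (2*M) j * P 2 j * P 2 (2*M - j) from by ring, qb_mul (2*M) j (by omega)]
        _ = b (n - k.natAbs^2) := (coeff_f (by omega) (by omega)).symm
    · rw [if_neg he, if_neg he]
  have l2 : coeff n (f 1 * f 1)
      = ∑ k ∈ Finset.Icc (-(M:ℤ)) (M:ℤ),
          ((k.negOnePow : ℤˣ) : ℤ) * (if k.natAbs^2 ≤ n then b (n - k.natAbs^2) else 0) := by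
    rw [l1, hsplit, SS, Finset.sum_mul, map_sum]
    exact Finset.sum_congr (Eq.refl _) hterm
  -- RHS
  have r1 : coeff n (f 2 * neg_q phi)
      = ∑ i ∈ Finset.range (n+1),
          ((-1:ℤ))^i * (if i = 0 then 1 else if IsSquare i then 2 else 0) * b (n-i) := by
    rw [mul_comm, coeff_mul, Finset.Nat.sum_antidiagonal_eq_sum_range_succ_mk]
    exact Finset.sum_congr (Eq.refl _) (fun i _ => by rw [coeff_negq_phi])
  rw [l2, r1]
  -- split sums
  set g : ℤ → ℤ :=
    fun k => ((k.negOnePow : ℤˣ) : ℤ) * (if k.natAbs^2 ≤ n then b (n - k.natAbs^2) else 0)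
    with hg
  have hsplitZ : Finset.Icc (-(M:ℤ)) (M:ℤ)
      = (Finset.Icc (-(M:ℤ)) (-1)) ∪ insert 0 (Finset.Icc 1 (M:ℤ)) := by
    ext x
    simp only [Finset.mem_Icc, Finset.mem_union, Finset.mem_insert]
    omega
  have hdisj : Disjoint (Finset.Icc (-(M:ℤ)) (-1)) (insert 0 (Finset.Icc 1 (M:ℤ))) := by
    rw [Finset.disjoint_left]
    intro x hx hx'
    simp only [Finset.mem_Icc] at hx
    simp only [Finset.mem_insert, Finset.mem_Icc] at hx'
    omega
  have hnot0 : (0:ℤ) ∉ Finset.Icc 1 (M:ℤ) := by simp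
  have hnegsum : ∑ k ∈ Finset.Icc (-(M:ℤ)) (-1), g k = ∑ k ∈ Finset.Icc 1 (M:ℤ), g k := by
    apply Finset.sum_nbij' (fun k => -k) (fun k => -k)
    · intro a ha; simp only [Finset.mem_Icc] at ha ⊢; omega
    · intro a ha; simp only [Finset.mem_Icc] at ha ⊢; omega
    · intro a _; ring
    · intro a _; ring
    · intro a _
      simp only [hg, Int.negOnePow_neg, Int.natAbs_neg]
  have hT : ∑ k ∈ Finset.Icc 1 (M:ℤ), g k
      = ∑ i ∈ (Finset.Icc 1 n).filter IsSquare, ((-1:ℤ))^i * b (n - i) := by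
    have hfil : ∑ k ∈ (Finset.Icc 1 (M:ℤ)).filter (fun k => k.natAbs^2 ≤ n), g k
        = ∑ k ∈ Finset.Icc 1 (M:ℤ), g k := by
      apply Finset.sum_filter_of_ne
      intro k _ hk0
      by_contra hc
      apply hk0
      simp only [hg, if_neg hc, mul_zero]
    rw [← hfil]
    apply Finset.sum_nbij' (fun k => k.natAbs^2) (fun i => ((Nat.sqrt i : ℕ) : ℤ))
    · intro a ha
      simp only [Finset.mem_filter, Finset.mem_Icc] at ha ⊢
      have h1a : 1 ≤ a.natAbs^2 := by
        simpa using Nat.pow_le_pow_left (show 1 ≤ a.natAbs by omega) 2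
      exact ⟨⟨by omega, ha.2⟩, ⟨a.natAbs, by rw [pow_two]⟩⟩
    · intro i hi
      simp only [Finset.mem_filter, Finset.mem_Icc] at hi ⊢
      obtain ⟨⟨h1, h2⟩, rr, hrr⟩ := hi
      subst hrr
      rw [Nat.sqrt_eq]
      have h3 : 1 ≤ rr := by nlinarith
      have h4 : rr ≤ rr * rr := Nat.le_mul_of_pos_left rr (by omega)
      constructor
      · constructor
        · omega
        · omega
      · rw [Int.natAbs_natCast, pow_two]; omega
    · intro a ha
      simp only [Finset.mem_filter, Finset.mem_Icc] at ha
      rw [Nat.sqrt_eq']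
      omega
    · intro i hi
      simp only [Finset.mem_filter, Finset.mem_Icc] at hi
      obtain ⟨⟨h1, h2⟩, rr, hrr⟩ := hi
      subst hrr
      rw [Nat.sqrt_eq, Int.natAbs_natCast, pow_two]
    · intro a ha
      simp only [Finset.mem_filter, Finset.mem_Icc] at ha
      obtain ⟨⟨h1, h2⟩, h3⟩ := ha
      simp only [hg, if_pos h3]
      congr 1
      have ha' : a = ((a.natAbs : ℕ) : ℤ) := by omega
      rw [ha', Int.coe_negOnePow_natCast, Int.natAbs_natCast, neg_one_pow_sq]
  have hRHS : ∑ i ∈ Finset.range (n+1),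
      ((-1:ℤ))^i * (if i = 0 then 1 else if IsSquare i then 2 else 0) * b (n-i)
      = b n + 2 * ∑ i ∈ (Finset.Icc 1 n).filter IsSquare, ((-1:ℤ))^i * b (n - i) := by
    have hr : Finset.range (n+1) = insert 0 (Finset.Icc 1 n) := by
      ext x; simp only [Finset.mem_range, Finset.mem_insert, Finset.mem_Icc]; omega
    rw [hr, Finset.sum_insert (by simp)]
    congr 1
    · simp
    · have hfil : ∑ i ∈ (Finset.Icc 1 n).filter IsSquare,
          ((-1:ℤ))^i * (if i = 0 then 1 else if IsSquare i then 2 else 0) * b (n-i)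
          = ∑ i ∈ Finset.Icc 1 n,
          ((-1:ℤ))^i * (if i = 0 then 1 else if IsSquare i then 2 else 0) * b (n-i) := by
        apply Finset.sum_filter_of_ne
        intro i hi h0
        simp only [Finset.mem_Icc] at hi
        by_contra hc
        apply h0
        rw [if_neg (by omega), if_neg hc]
        ring
      rw [← hfil, Finset.mul_sum]
      apply Finset.sum_congr (Eq.refl _)
      intro i hi
      simp only [Finset.mem_filter, Finset.mem_Icc] at hi
      rw [if_neg (by omega), if_pos hi.2]
      ring
  rw [hsplitZ, Finset.sum_union hdisj, Finset.sum_insert hnot0, hnegsum, hT, hRHS]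
  have hg0 : g 0 = b n := by simp [hg]
  rw [show (((0:ℤ).negOnePow : ℤˣ) : ℤ) * (if (0:ℤ).natAbs^2 ≤ n then b (n - (0:ℤ).natAbs^2) else 0) = g 0 from rfl, hg0]
  ring

end Oc

lemma theta_ring {R : Type*} [CommRing R] (S E U V A1 A2 : R)
    (hS : S^2 = U + 2*A1) (hU : U^2 = V + 2*A2) (h64x : (64:R) = 0) :
    (21 + 12*(1-2*(S-2*E))^2 + 16*(1+2*U) + 16*(1+2*V)) * (1-2*(S-2*E))^8 = 1 := by
  linear_combination 
    ((32) + (32)*U + (32)*S^2) * hS + ((32)) * hU + ((1) + A2 + A1 + V + U + U*A1 + (34)*E + (16)*E*V + (16)*E*U + (506)*E^2 + (224)*E^2*V + (224)*E^2*U + (4408)*E^3 + (1792)*E^3*V + (1792)*E^3*U + (24920)*E^4 + (8960)*E^4*V + (8960)*E^4*U + (95872)*E^5 + (28672)*E^5*V + (28672)*E^5*U + (256256)*E^6 + (57344)*E^6*V + (57344)*E^6*U + (477184)*E^7 + (65536)*E^7*V + (65536)*E^7*U + (607232)*E^8 + (32768)*E^8*V + (32768)*E^8*U + (491520)*E^9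 + (196608)*E^10 + (-17)*S + (-8)*S*V + (-8)*S*U + (-506)*S*E + (-224)*S*E*V + (-224)*S*E*U + (-6612)*S*E^2 + (-2688)*S*E^2*V + (-2688)*S*E^2*U + (-49840)*S*E^3 + (-17920)*S*E^3*V + (-17920)*S*E^3*U + (-239680)*S*E^4 + (-71680)*S*E^4*V + (-71680)*S*E^4*U + (-768768)*S*E^5 + (-172032)*S*E^5*V + (-172032)*S*E^5*U + (-1670144)*S*E^6 + (-229376)*S*E^6*V + (-229376)*S*E^6*U + (-2428928)*S*E^7 + (-131072)*S*E^7*V + (-131072)*S*E^7*U + (-2211840)*S*E^8 + (-983040)*S*E^9 + (126)*S^2 + S^2*A1 + (56)*S^2*V + (56)*S^2*U + (3306)*S^2*E + (1344)*S^2*E*V + (1344)*S^2*E*U + (37380)*S^2*E^2 + (13440)*S^2*E^2*V + (13440)*S^2*E^2*U + (239680)*S^2*E^3 + (71680)*S^2*E^3*V + (71680)*S^2*E^3*U + (960960)*S^2*E^4 + (215040)*S^2*E^4*V + (215040)*S^2*E^4*U + (2505216)*S^2*E^5 + (344064)*S^2*E^5*V + (344064)*S^2*E^5*U + (4250624)*S^2*E^6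 + (229376)*S^2*E^6*V + (229376)*S^2*E^6*U + (4423680)*S^2*E^7 + (2211840)*S^2*E^8 + (-551)*S^3 + (-224)*S^3*V + (-224)*S^3*U + (-12460)*S^3*E + (-4480)*S^3*E*V + (-4480)*S^3*E*U + (-119840)*S^3*E^2 + (-35840)*S^3*E^2*V + (-35840)*S^3*E^2*U + (-640640)*S^3*E^3 + (-143360)*S^3*E^3*V + (-143360)*S^3*E^3*U + (-2087680)*S^3*E^4 + (-286720)*S^3*E^4*V + (-286720)*S^3*E^4*U + (-4250624)*S^3*E^5 + (-229376)*S^3*E^5*V + (-229376)*S^3*E^5*U + (-5160960)*S^3*E^6 + (-2949120)*S^3*E^7 + (1557)*S^4 + (560)*S^4*V + (560)*S^4*U + (29960)*S^4*E + (8960)*S^4*E*V + (8960)*S^4*E*U + (240240)*S^4*E^2 + (53760)*S^4*E^2*V + (53760)*S^4*E^2*U + (1043840)*S^4*E^3 + (143360)*S^4*E^3*V + (143360)*S^4*E^3*U + (2656640)*S^4*E^4 + (143360)*S^4*E^4*V + (143360)*S^4*E^4*U + (3870720)*S^4*E^5 + (2580480)*S^4*E^6 + (-2996)*S^5 + (-896)*S^5*V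 + (-896)*S^5*U + (-48048)*S^5*E + (-10752)*S^5*E*V + (-10752)*S^5*E*U + (-313152)*S^5*E^2 + (-43008)*S^5*E^2*V + (-43008)*S^5*E^2*U + (-1062656)*S^5*E^3 + (-57344)*S^5*E^3*V + (-57344)*S^5*E^3*U + (-1935360)*S^5*E^4 + (-1548288)*S^5*E^5 + (4004)*S^6 + (896)*S^6*V + (896)*S^6*U + (52192)*S^6*E + (7168)*S^6*E*V + (7168)*S^6*E*U + (265664)*S^6*E^2 + (14336)*S^6*E^2*V + (14336)*S^6*E^2*U + (645120)*S^6*E^3 + (645120)*S^6*E^4 + (-3728)*S^7 + (-512)*S^7*V + (-512)*S^7*U + (-37952)*S^7*E + (-2048)*S^7*E*V + (-2048)*S^7*E*U + (-138240)*S^7*E^2 + (-184320)*S^7*E^3 + (2372)*S^8 + (128)*S^8*V + (128)*S^8*U + (17280)*S^8*E + (34560)*S^8*E^2 + (-960)*S^9 + (-3840)*S^9*E + (192)*S^10) * h64x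


theorem stmt12 (n : ℕ) :
    (64 : ℤ) ∣ PowerSeries.coeff n
      (f 2 ^ 8 * Ring.inverse (f 1) ^ 16
        - (21 + 12 * (neg_q phi) ^ 2 + 16 * substPow 2 phi + 16 * substPow 4 phi)) := by
  obtain ⟨T1, hT1⟩ := Oc.frob Oc.sq
  obtain ⟨T2, hT2⟩ := Oc.frob (substPow 2 Oc.sq)
  have hT2' : substPow 2 Oc.sq * substPow 2 Oc.sq = substPow 4 Oc.sq + 2 * T2 := by
    rw [hT2, Oc.substPow_substPow]
  have hu : IsUnit (f 1) := by
    rw [PowerSeries.isUnit_iff_constantCoeff]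
    have h0 : constantCoeff (f 1) = 1 := by
      rw [← PowerSeries.coeff_zero_eq_constantCoeff_apply,
        Oc.coeff_f (m := 1) (by omega) (le_refl 0), Oc.P_zero, Oc.coeff_one]
      norm_num
    rw [h0]
    exact isUnit_one
  have hinv : f 1 * Ring.inverse (f 1) = 1 := Ring.mul_inverse_cancel _ hu
  set π : PowerSeries ℤ →+* PowerSeries (ZMod 64) :=
    PowerSeries.map (Int.castRingHom (ZMod 64)) with hπ
  have h64 : (64 : PowerSeries (ZMod 64)) = 0 := by
    rw [← map_ofNat (C (R := ZMod 64)) 64, show (64 : ZMod 64) = 0 from by decide, map_zero]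
  -- theta-side
  have hneg : π (neg_q phi) = 1 - 2*(π Oc.sq - 2 * π Oc.esq) := by
    rw [Oc.negq_phi_eq, Oc.tser_eq]
    simp only [map_sub, map_mul, map_one, map_ofNat]
  have hp2 : π (substPow 2 phi) = 1 + 2 * π (substPow 2 Oc.sq) := by
    rw [Oc.substPow_phi 2 (by omega)]
    simp only [map_add, map_mul, map_one, map_ofNat]
  have hp4 : π (substPow 4 phi) = 1 + 2 * π (substPow 4 Oc.sq) := by
    rw [Oc.substPow_phi 4 (by omega)]
    simp only [map_add, map_mul, map_one, map_ofNat]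
  have hS : (π Oc.sq)^2 = π (substPow 2 Oc.sq) + 2 * π T1 := by
    rw [pow_two, ← map_mul, hT1]
    simp only [map_add, map_mul, map_ofNat]
  have hU : (π (substPow 2 Oc.sq))^2 = π (substPow 4 Oc.sq) + 2 * π T2 := by
    rw [pow_two, ← map_mul, hT2']
    simp only [map_add, map_mul, map_ofNat]
  have key2 : π (21 + 12 * (neg_q phi) ^ 2 + 16 * substPow 2 phi + 16 * substPow 4 phi)
      * (π (neg_q phi))^8 = 1 := by
    have hmain := theta_ring (π Oc.sq) (π Oc.esq) (π (substPow 2 Oc.sq))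
      (π (substPow 4 Oc.sq)) (π T1) (π T2) hS hU h64
    calc π (21 + 12 * (neg_q phi) ^ 2 + 16 * substPow 2 phi + 16 * substPow 4 phi)
        * (π (neg_q phi))^8
        = (21 + 12*(π (neg_q phi))^2 + 16*(π (substPow 2 phi)) + 16*(π (substPow 4 phi)))
          * (π (neg_q phi))^8 := by
          simp only [map_add, map_mul, map_pow, map_ofNat]
      _ = (21 + 12*(1-2*(π Oc.sq-2*π Oc.esq))^2 + 16*(1+2*π (substPow 2 Oc.sq))
            + 16*(1+2*π (substPow 4 Oc.sq))) * (1-2*(π Oc.sq-2*π Oc.esq))^8 := by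
          rw [hneg, hp2, hp4]
      _ = 1 := hmain
  have key3 : (π (f 1))^2 = π (f 2) * π (neg_q phi) := by
    rw [pow_two, ← map_mul, ← map_mul, Oc.gauss]
  have key1 : π (f 1) * π (Ring.inverse (f 1)) = 1 := by
    rw [← map_mul, hinv, map_one]
  -- final computation in (ZMod 64)[[X]]
  have hfinal : π (f 2 ^ 8 * Ring.inverse (f 1) ^ 16
      - (21 + 12 * (neg_q phi) ^ 2 + 16 * substPow 2 phi + 16 * substPow 4 phi)) = 0 := by
    rw [map_sub, map_mul, map_pow, map_pow]
    set R2 := π (21 + 12 * (neg_q phi) ^ 2 + 16 * substPow 2 phi + 16 * substPow 4 phi)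
    have : (π (f 2))^8 * (π (Ring.inverse (f 1)))^16
        = R2 * ((π (f 2))^8 * (π (neg_q phi))^8) * (π (Ring.inverse (f 1)))^16 := by
      calc (π (f 2))^8 * (π (Ring.inverse (f 1)))^16
          = (π (f 2))^8 * (π (Ring.inverse (f 1)))^16 * (R2 * (π (neg_q phi))^8) := by
            rw [key2, mul_one]
        _ = R2 * ((π (f 2))^8 * (π (neg_q phi))^8) * (π (Ring.inverse (f 1)))^16 := by ring
    rw [this]
    have hsq : (π (f 2))^8 * (π (neg_q phi))^8 = ((π (f 1))^2)^8 := by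
      rw [key3, mul_pow]
    rw [hsq]
    have : R2 * ((π (f 1))^2)^8 * (π (Ring.inverse (f 1)))^16
        = R2 * (π (f 1) * π (Ring.inverse (f 1)))^16 := by ring
    rw [this, key1, one_pow, mul_one, sub_self]
  have hc : ((PowerSeries.coeff n (f 2 ^ 8 * Ring.inverse (f 1) ^ 16
      - (21 + 12 * (neg_q phi) ^ 2 + 16 * substPow 2 phi + 16 * substPow 4 phi)) : ℤ)
        : ZMod 64) = 0 := by
    have := PowerSeries.coeff_map (Int.castRingHom (ZMod 64)) n
      (f 2 ^ 8 * Ring.inverse (f 1) ^ 16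
        - (21 + 12 * (neg_q phi) ^ 2 + 16 * substPow 2 phi + 16 * substPow 4 phi))
    rw [← hπ] at this
    rw [show ((PowerSeries.coeff n (f 2 ^ 8 * Ring.inverse (f 1) ^ 16
      - (21 + 12 * (neg_q phi) ^ 2 + 16 * substPow 2 phi + 16 * substPow 4 phi)) : ℤ)
        : ZMod 64) = (Int.castRingHom (ZMod 64)) (PowerSeries.coeff n
          (f 2 ^ 8 * Ring.inverse (f 1) ^ 16
            - (21 + 12 * (neg_q phi) ^ 2 + 16 * substPow 2 phi + 16 * substPow 4 phi)))
      from rfl, ← this, hfinal, map_zero]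
  exact (ZMod.intCast_zmod_eq_zero_iff_dvd _ 64).mp hc
end
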